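/- arXiv:1807.08795 — 6 statements merged into one kernel-verified Lean document; each statement's English description precedes it below -/
import Mathlib

section
/- Let S = (s_1 < s_2 < ⋯ < s_r) be a strictly increasing sequence of positive integers. Then the permutohedron Π_S equals the set of all x ∈ ℝ^r satisfying x_1 + ⋯ + x_r = τ_r together with the inequalities ∑_{i∈P} x_i ≥ τ_{|P|} for every nonempty proper subset P ⊆ {1,…,r}. -/
/-- The permutohedron in `ℝ^r` on the values `s 0, …, s (r-1)`: the convex hull of
all points whose coordinates are `(s (σ 0), …, s (σ (r-1)))` for permutations `σ`. -/
def permutohedron (r : ℕ) (s : ℕ → ℝ) : Set (Fin r → ℝ) :=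
  convexHull ℝ {x : Fin r → ℝ | ∃ σ : Equiv.Perm (Fin r), ∀ i, x i = s (σ i)}

section PermutohedronAux

open Finset

noncomputable def ptau (s : ℕ → ℕ) (k : ℕ) : ℝ := ∑ i ∈ Finset.range k, (s i : ℝ)

lemma ptau_convex (s : ℕ → ℕ) (hmono : StrictMono s) {a p q b : ℕ}
    (hap : a ≤ p) (haq : a ≤ q) (hab : a + b = p + q) :
    ptau s p + ptau s q ≤ ptau s a + ptau s b := by
  obtain ⟨m, rfl⟩ := Nat.exists_eq_add_of_le hap
  have hb : b = q + m := by omega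
  subst hb
  have h1 : ptau s (a + m) = ptau s a + ∑ i ∈ range m, (s (a + i) : ℝ) := by
    simpa [ptau] using Finset.sum_range_add (fun i => (s i : ℝ)) a m
  have h2 : ptau s (q + m) = ptau s q + ∑ i ∈ range m, (s (q + i) : ℝ) := by
    simpa [ptau] using Finset.sum_range_add (fun i => (s i : ℝ)) q m
  have h3 : ∑ i ∈ range m, (s (a + i) : ℝ) ≤ ∑ i ∈ range m, (s (q + i) : ℝ) :=
    Finset.sum_le_sum fun i _ => by exact_mod_cast hmono.monotone (by omega)
  linarith

lemma ptau_strict_convex (s : ℕ → ℕ) (hmono : StrictMono s) {a k b : ℕ}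
    (hak : a < k) (hab : a + b = k + k) :
    ptau s k + ptau s k < ptau s a + ptau s b := by
  obtain ⟨m, rfl⟩ := Nat.exists_eq_add_of_le hak.le
  have hb : b = a + m + m := by omega
  subst hb
  have h1 : ptau s (a + m) = ptau s a + ∑ i ∈ range m, (s (a + i) : ℝ) := by
    simpa [ptau] using Finset.sum_range_add (fun i => (s i : ℝ)) a m
  have h2 : ptau s (a + m + m) = ptau s (a + m) + ∑ i ∈ range m, (s (a + m + i) : ℝ) := by
    simpa [ptau] using Finset.sum_range_add (fun i => (s i : ℝ)) (a + m) m
  have hmpos : 0 < m := by omega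
  have h3 : ∑ i ∈ range m, (s (a + i) : ℝ) < ∑ i ∈ range m, (s (a + m + i) : ℝ) := by
    apply Finset.sum_lt_sum_of_nonempty (by simp; omega)
    intro i _
    exact_mod_cast hmono (by omega)
  linarith

lemma sum_sorted_le (s : ℕ → ℕ) (hmono : StrictMono s) (Q : Finset ℕ) :
    ptau s Q.card ≤ ∑ q ∈ Q, (s q : ℝ) := by
  induction Q using Finset.strongInduction with
  | _ Q ih =>
    rcases Q.eq_empty_or_nonempty with rfl | hne
    · simp [ptau]
    · set m := Q.max' hne with hm
      have hmQ : m ∈ Q := Q.max'_mem hne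
      have hcard : Q.card ≤ m + 1 := by
        have : Q ⊆ Finset.range (m + 1) := fun q hq =>
          Finset.mem_range.2 (Nat.lt_succ_of_le (Q.le_max' q hq))
        simpa using Finset.card_le_card this
      have hcard' : (Q.erase m).card = Q.card - 1 := Finset.card_erase_of_mem hmQ
      have hQpos : 1 ≤ Q.card := Finset.card_pos.2 hne
      have ihe := ih (Q.erase m) (Finset.erase_ssubset hmQ)
      rw [hcard'] at ihe
      have hsum : ∑ q ∈ Q.erase m, (s q : ℝ) + (s m : ℝ) = ∑ q ∈ Q, (s q : ℝ) :=
        Finset.sum_erase_add _ _ hmQ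
      have htau : ptau s Q.card = ptau s (Q.card - 1) + (s (Q.card - 1) : ℝ) := by
        have : Q.card = (Q.card - 1) + 1 := by omega
        rw [this, ptau, Finset.sum_range_succ]; rfl
      have hsm : (s (Q.card - 1) : ℝ) ≤ (s m : ℝ) := by
        exact_mod_cast hmono.monotone (by omega)
      linarith

lemma extreme_is_vertex (r : ℕ) (s : ℕ → ℕ) (hmono : StrictMono s) (x : Fin r → ℝ)
    (hineq : ∀ P : Finset (Fin r), ptau s P.card ≤ ∑ i ∈ P, x i)
    (htuniv : ∑ i ∈ Finset.univ, x i = ptau s r)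
    (hsep : ∀ i j : Fin r, i ≠ j →
      ∃ P : Finset (Fin r), (∑ i ∈ P, x i = ptau s P.card) ∧ (i ∈ P ↔ j ∉ P)) :
    ∃ σ : Equiv.Perm (Fin r), ∀ i, x i = s (σ i) := by
  classical
  set Tight : Finset (Fin r) → Prop := fun P => ∑ i ∈ P, x i = ptau s P.card with hTight
  have htop : Tight ⊤ := by
    simpa [Tight, ptau, Finset.card_univ] using htuniv
  have hbot : Tight ⊥ := by simp [Tight, ptau]
  have hpair : ∀ P Q, Tight P → Tight Q → Tight (P ∩ Q) ∧ Tight (P ∪ Q) := by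
    intro P Q hP hQ
    have hcard : (P ∪ Q).card + (P ∩ Q).card = P.card + Q.card :=
      Finset.card_union_add_card_inter P Q
    have hsum2 : (∑ i ∈ P ∪ Q, x i) + ∑ i ∈ P ∩ Q, x i = (∑ i ∈ P, x i) + ∑ i ∈ Q, x i :=
      Finset.sum_union_inter
    have h1 := hineq (P ∩ Q)
    have h2 := hineq (P ∪ Q)
    have key : ptau s P.card + ptau s Q.card ≤ ptau s (P ∩ Q).card + ptau s (P ∪ Q).card :=
      ptau_convex s hmono (Finset.card_le_card Finset.inter_subset_left)
        (Finset.card_le_card Finset.inter_subset_right) (by omega)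
    constructor <;> (simp only [Tight] at hP hQ ⊢; linarith)
  -- minimal tight set containing i
  set T : Fin r → Finset (Fin r) :=
    fun i => (Finset.univ.filter fun P => Tight P ∧ i ∈ P).inf id with hT
  have hTtight : ∀ i, Tight (T i) := by
    intro i
    exact Finset.inf_induction htop (fun a ha b hb => (hpair a b ha hb).1)
      (fun P hP => (Finset.mem_filter.1 hP).2.1)
  have hiT : ∀ i, i ∈ T i := by
    intro i
    have : {i} ≤ T i := Finset.le_inf fun P hP => by
      simpa using (Finset.mem_filter.1 hP).2.2
    simpa using this
  have hTmin : ∀ i P, Tight P → i ∈ P → T i ⊆ P := by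
    intro i P hP hiP
    have : T i ≤ id P := Finset.inf_le (by
      simp only [Finset.mem_filter]
      exact ⟨Finset.mem_univ _, hP, hiP⟩)
    exact this
  have hTne : ∀ i j : Fin r, i ≠ j → T i ≠ T j := by
    intro i j hij heq
    obtain ⟨P, hPt, hPsep⟩ := hsep i j hij
    by_cases hiP : i ∈ P
    · have hjP : j ∉ P := hPsep.1 hiP
      exact hjP (hTmin i P hPt hiP (heq ▸ hiT j))
    · have hjP : j ∈ P := by by_contra h; exact hiP (hPsep.2 h)
      exact hiP (hTmin j P hPt hjP (heq ▸ hiT i))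
  have hTsub : ∀ i j, j ∈ T i → T j ⊆ T i := fun i j hj => hTmin j (T i) (hTtight i) hj
  -- x i = s (card (T i) - 1)
  have hxval : ∀ i, x i = s ((T i).card - 1) := by
    intro i
    set U := (T i).erase i with hU
    have hUeq : U = U.sup T := by
      apply Finset.Subset.antisymm
      · intro j hj
        exact Finset.mem_of_subset (Finset.le_sup hj) (hiT j)
      · have : U.sup T ≤ U := by
          apply Finset.sup_le
          intro j hj
          have hjne : j ≠ i := (Finset.mem_erase.1 hj).1
          have hjT : j ∈ T i := (Finset.mem_erase.1 hj).2
          have h1 : T j ⊆ T i := hTsub i j hjT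
          have h2 : i ∉ T j := by
            intro hiTj
            exact hTne i j (Ne.symm hjne) (Finset.Subset.antisymm (hTsub j i hiTj) h1)
          exact Finset.le_iff_subset.2 (Finset.subset_erase.2 ⟨h1, h2⟩)
        exact this
    have hUtight : Tight U := by
      rw [hUeq]
      exact Finset.sup_induction hbot (fun a ha b hb => (hpair a b ha hb).2)
        (fun j _ => hTtight j)
    have hcardU : U.card = (T i).card - 1 := Finset.card_erase_of_mem (hiT i)
    have hcardpos : 1 ≤ (T i).card := Finset.card_pos.2 ⟨i, hiT i⟩
    have hsumsplit : (∑ j ∈ U, x j) + x i = ∑ j ∈ T i, x j := Finset.sum_erase_add _ _ (hiT i)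
    have htTi := hTtight i
    simp only [Tight] at htTi hUtight
    have htau : ptau s (T i).card = ptau s ((T i).card - 1) + (s ((T i).card - 1) : ℝ) := by
      have h : (T i).card = ((T i).card - 1) + 1 := by omega
      rw [h, ptau, Finset.sum_range_succ]; rfl
    rw [hcardU] at hUtight
    linarith
  -- injectivity of card ∘ T
  have hinj : ∀ i j : Fin r, (T i).card = (T j).card → i = j := by
    intro i j hcard
    by_contra hij
    have hne := hTne i j hij
    have hAi : T i ∩ T j ⊆ T i := Finset.inter_subset_left
    have hak : (T i ∩ T j).card < (T i).card := by
      rcases lt_or_eq_of_le (Finset.card_le_card hAi) with h | h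
      · exact h
      · exfalso
        have heq : T i ∩ T j = T i := Finset.eq_of_subset_of_card_le hAi (le_of_eq h.symm)
        have : T i ⊆ T j := heq ▸ Finset.inter_subset_right
        exact hne (Finset.eq_of_subset_of_card_le this (le_of_eq hcard.symm))
    have hcard2 : (T i ∪ T j).card + (T i ∩ T j).card = (T i).card + (T j).card :=
      Finset.card_union_add_card_inter _ _
    have hsum2 : (∑ k ∈ T i ∪ T j, x k) + ∑ k ∈ T i ∩ T j, x k
        = (∑ k ∈ T i, x k) + ∑ k ∈ T j, x k := Finset.sum_union_inter
    have hti := hTtight i; have htj := hTtight j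
    have htint := hineq (T i ∩ T j)
    have htun := hineq (T i ∪ T j)
    simp only [Tight] at hti htj
    have hstrict : ptau s (T i).card + ptau s (T i).card
        < ptau s (T i ∩ T j).card + ptau s (T i ∪ T j).card :=
      ptau_strict_convex s hmono hak (by omega)
    rw [← hcard] at htj
    linarith
  -- build the permutation
  have hcardle : ∀ i, (T i).card - 1 < r := by
    intro i
    have h1 : (T i).card ≤ r := by simpa using Finset.card_le_univ (T i)
    have h2 : 1 ≤ (T i).card := Finset.card_pos.2 ⟨i, hiT i⟩
    omega
  set π : Fin r → Fin r := fun i => ⟨(T i).card - 1, hcardle i⟩ with hπ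
  have hπinj : Function.Injective π := by
    intro i j h
    apply hinj
    have h1 : 1 ≤ (T i).card := Finset.card_pos.2 ⟨i, hiT i⟩
    have h2 : 1 ≤ (T j).card := Finset.card_pos.2 ⟨j, hiT j⟩
    have := congrArg Fin.val h
    simp only [hπ] at this
    omega
  refine ⟨Equiv.ofBijective π (Finite.injective_iff_bijective.1 hπinj), ?_⟩
  intro i
  simpa [Equiv.ofBijective, hπ] using hxval i

end PermutohedronAux

/-- For a strictly increasing sequence of positive integers
`s_1 < ⋯ < s_r` (here `s 0 < s 1 < ⋯`, 0-based), the permutohedron `Π_S` equals the set of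
points with `x_1 + ⋯ + x_r = τ_r` and `∑_{i ∈ P} x_i ≥ τ_{|P|}` for every nonempty proper
subset `P ⊆ {1,…,r}`, where `τ_k = s_1 + ⋯ + s_k`. -/
theorem permutohedron_eq_halfspaces (r : ℕ) (s : ℕ → ℕ)
    (hmono : StrictMono s) (hpos : ∀ i, 0 < s i) :
    permutohedron r (fun i => (s i : ℝ)) =
      {x : Fin r → ℝ |
        (∑ i, x i) = ∑ i ∈ Finset.range r, (s i : ℝ) ∧
        ∀ P : Finset (Fin r), P.Nonempty → P ≠ Finset.univ →
          ∑ i ∈ Finset.range P.card, (s i : ℝ) ≤ ∑ i ∈ P, x i} := by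
  have hptau : ∀ k, ptau s k = ∑ i ∈ Finset.range k, (s i : ℝ) := fun _ => rfl
  have sum_sorted_le := sum_sorted_le s hmono
  have extreme_is_vertex := extreme_is_vertex r s hmono
  show convexHull ℝ {x : Fin r → ℝ | ∃ σ : Equiv.Perm (Fin r), ∀ i, x i = (s (σ i) : ℝ)} = _
  classical
  set V : Set (Fin r → ℝ) := {x | ∃ σ : Equiv.Perm (Fin r), ∀ i, x i = s (σ i)} with hV
  set K : Set (Fin r → ℝ) := {x : Fin r → ℝ |
        (∑ i, x i) = ∑ i ∈ Finset.range r, (s i : ℝ) ∧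
        ∀ P : Finset (Fin r), P.Nonempty → P ≠ Finset.univ →
          ∑ i ∈ Finset.range P.card, (s i : ℝ) ≤ ∑ i ∈ P, x i} with hK
  -- all-subsets inequality (including ∅ and univ)
  have hKsub : ∀ x ∈ K, ∀ P : Finset (Fin r), ptau s P.card ≤ ∑ i ∈ P, x i := by
    intro x hx P
    rcases P.eq_empty_or_nonempty with rfl | hPne
    · simp [hptau]
    rcases eq_or_ne P Finset.univ with rfl | hPu
    · rw [Finset.card_univ, Fintype.card_fin, hptau, ← hx.1]
    · rw [hptau]; exact hx.2 P hPne hPu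
  have hKuniv : ∀ x ∈ K, ∑ i ∈ Finset.univ, x i = ptau s r := by
    intro x hx; rw [hptau]; exact hx.1
  -- V ⊆ K
  have hVK : V ⊆ K := by
    rintro x ⟨σ, hσ⟩
    have hxs : ∀ i, x i = (s (σ i) : ℝ) := hσ
    constructor
    · have h1 : ∑ i, x i = ∑ i, (s (σ i) : ℝ) := Finset.sum_congr rfl fun i _ => hxs i
      rw [h1, Equiv.sum_comp σ (fun i => (s i : ℝ)), ← Fin.sum_univ_eq_sum_range]
    · intro P hPne hPu
      set Q : Finset ℕ := P.image (fun i => ((σ i : Fin r) : ℕ)) with hQ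
      have hinj : Function.Injective (fun i : Fin r => ((σ i : Fin r) : ℕ)) :=
        Fin.val_injective.comp σ.injective
      have hcard : Q.card = P.card := Finset.card_image_of_injective _ hinj
      have hsum : ∑ q ∈ Q, (s q : ℝ) = ∑ i ∈ P, x i := by
        rw [hQ, Finset.sum_image (fun a _ b _ h => hinj h)]
        exact Finset.sum_congr rfl fun i _ => (hxs i).symm
      have := sum_sorted_le Q
      rw [hcard, hsum, hptau] at this
      exact this
  -- convexity of K
  have hKconv : Convex ℝ K := by
    intro x hx y hy a b ha hb hab
    have hcomb : ∀ P : Finset (Fin r),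
        ∑ i ∈ P, (a • x + b • y) i = a * ∑ i ∈ P, x i + b * ∑ i ∈ P, y i := by
      intro P
      simp [Finset.sum_add_distrib, Finset.mul_sum]
    constructor
    · have := hcomb Finset.univ
      show ∑ i, (a • x + b • y) i = _
      rw [this, hx.1, hy.1]
      linear_combination (∑ i ∈ Finset.range r, (s i : ℝ)) * hab
    · intro P hPne hPu
      have h1 := hx.2 P hPne hPu
      have h2 := hy.2 P hPne hPu
      rw [hcomb P]
      have h3 : a * (∑ i ∈ Finset.range P.card, (s i : ℝ)) +
          b * (∑ i ∈ Finset.range P.card, (s i : ℝ)) = ∑ i ∈ Finset.range P.card, (s i : ℝ) := by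
        linear_combination (∑ i ∈ Finset.range P.card, (s i : ℝ)) * hab
      nlinarith [mul_le_mul_of_nonneg_left h1 ha, mul_le_mul_of_nonneg_left h2 hb]
  -- closedness
  have hKclosed : IsClosed K := by
    have : K = {x : Fin r → ℝ | ∑ i, x i = ∑ i ∈ Finset.range r, (s i : ℝ)} ∩
        ⋂ (P : Finset (Fin r)) (_ : P.Nonempty ∧ P ≠ Finset.univ),
          {x : Fin r → ℝ | ∑ i ∈ Finset.range P.card, (s i : ℝ) ≤ ∑ i ∈ P, x i} := by
      ext x
      simp only [hK, Set.mem_setOf_eq, Set.mem_inter_iff, Set.mem_iInter]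
      constructor
      · rintro ⟨h1, h2⟩; exact ⟨h1, fun P hP => h2 P hP.1 hP.2⟩
      · rintro ⟨h1, h2⟩; exact ⟨h1, fun P h h' => h2 P ⟨h, h'⟩⟩
    rw [this]
    have hcont : ∀ P : Finset (Fin r), Continuous fun x : Fin r → ℝ => ∑ i ∈ P, x i :=
      fun P => continuous_finset_sum P fun i _ => continuous_apply i
    exact IsClosed.inter (isClosed_eq (hcont Finset.univ) continuous_const)
      (isClosed_iInter fun P => isClosed_iInter fun _ =>
        isClosed_le continuous_const (hcont P))
  -- compactness
  have hbound : ∀ x ∈ K, ∀ i, (s 0 : ℝ) ≤ x i ∧ x i ≤ ptau s r - ptau s (r - 1) := by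
    intro x hx i
    have hlow := hKsub x hx {i}
    rw [Finset.card_singleton, Finset.sum_singleton] at hlow
    have hlow' : (s 0 : ℝ) ≤ x i := by
      rw [hptau, Finset.sum_range_one] at hlow; exact hlow
    have hE := hKsub x hx (Finset.univ.erase i)
    rw [Finset.card_erase_of_mem (Finset.mem_univ i), Finset.card_univ, Fintype.card_fin] at hE
    have hsplit : (∑ j ∈ Finset.univ.erase i, x j) + x i = ∑ j ∈ Finset.univ, x j :=
      Finset.sum_erase_add _ _ (Finset.mem_univ i)
    have huniv := hKuniv x hx
    exact ⟨hlow', by linarith⟩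
  have hKcomp : IsCompact K := by
    apply IsCompact.of_isClosed_subset
      (isCompact_Icc (a := fun _ : Fin r => (s 0 : ℝ))
        (b := fun _ : Fin r => ptau s r - ptau s (r - 1))) hKclosed
    intro x hx
    rw [Set.mem_Icc]
    exact ⟨fun i => (hbound x hx i).1, fun i => (hbound x hx i).2⟩
  -- extreme points are vertices
  have hextV : K.extremePoints ℝ ⊆ V := by
    intro x hx
    obtain ⟨hxK, hxprop⟩ := hx
    apply extreme_is_vertex x (hKsub x hxK) (hKuniv x hxK)
    intro i j hij
    by_contra hcon
    push_neg at hcon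
    set d : Fin r → ℝ := fun k => (if k = i then (1 : ℝ) else 0) - (if k = j then 1 else 0)
      with hd
    have hdsum : ∀ P : Finset (Fin r),
        ∑ k ∈ P, d k = (if i ∈ P then (1 : ℝ) else 0) - (if j ∈ P then 1 else 0) := by
      intro P
      simp [hd, Finset.sum_sub_distrib, Finset.sum_ite_eq']
    set Sep : Finset (Finset (Fin r)) :=
      Finset.univ.filter (fun P : Finset (Fin r) => (i ∈ P ↔ j ∉ P)) with hSep
    have hSepne : Sep.Nonempty := by
      refine ⟨{i}, ?_⟩
      rw [hSep, Finset.mem_filter]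
      refine ⟨Finset.mem_univ _, ?_⟩
      simpa using fun h : j = i => hij h.symm
    set ε : ℝ := Sep.inf' hSepne (fun P => ∑ k ∈ P, x k - ptau s P.card) with hε
    have hεpos : 0 < ε := by
      rw [hε, Finset.lt_inf'_iff]
      intro P hP
      have h1 := hKsub x hxK P
      have hPsep := (Finset.mem_filter.1 hP).2
      have h2 : ∑ k ∈ P, x k ≠ ptau s P.card := by
        intro h
        rcases hcon P h with ⟨ha1, ha2⟩ | ⟨ha1, ha2⟩ <;> tauto
      have := lt_of_le_of_ne h1 (Ne.symm h2)
      linarith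
    have hεle : ∀ P ∈ Sep, ε ≤ ∑ k ∈ P, x k - ptau s P.card :=
      fun P hP => Finset.inf'_le _ hP
    have hmem : ∀ (c : ℝ), c = 1 ∨ c = -1 → x + (c * ε) • d ∈ K := by
      intro c hc
      have hysum : ∀ P : Finset (Fin r), ∑ k ∈ P, (x + (c * ε) • d) k =
          ∑ k ∈ P, x k + (c * ε) * ((if i ∈ P then (1 : ℝ) else 0) -
            (if j ∈ P then 1 else 0)) := by
        intro P
        rw [← hdsum P]
        simp [Finset.sum_add_distrib, Finset.mul_sum]
      constructor
      · show ∑ k, (x + (c * ε) • d) k = _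
        rw [hysum Finset.univ]
        simp only [Finset.mem_univ, if_pos]
        rw [hKuniv x hxK, hptau]
        ring
      · intro P hPne hPu
        have hb := hKsub x hxK P
        rw [hptau] at hb
        rw [hysum P]
        by_cases hiP : i ∈ P <;> by_cases hjP : j ∈ P
        · simp only [hiP, hjP, if_pos]; rw [sub_self, mul_zero, add_zero]; exact hb
        · -- i ∈ P, j ∉ P : P is separating
          have hPsep : P ∈ Sep := by
            simp only [hSep, Finset.mem_filter, Finset.mem_univ, true_and]
            exact ⟨fun _ => hjP, fun _ => hiP⟩
          have h3 := hεle P hPsep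
          rw [hptau] at h3
          simp only [hiP, hjP, if_pos, if_neg, not_false_iff]
          rcases hc with rfl | rfl <;> · simp; linarith
        · -- i ∉ P, j ∈ P : P is separating
          have hPsep : P ∈ Sep := by
            simp only [hSep, Finset.mem_filter, Finset.mem_univ, true_and]
            constructor
            · intro h; exact absurd h hiP
            · intro h; exact absurd hjP h
          have h3 := hεle P hPsep
          rw [hptau] at h3
          simp only [hiP, hjP, if_neg, not_false_iff, if_pos]
          rcases hc with rfl | rfl <;> · simp; linarith
        · simp only [hiP, hjP, if_neg, not_false_iff]; rw [sub_self, mul_zero, add_zero]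
          exact hb
    have hy1 : x + (1 * ε) • d ∈ K := hmem 1 (Or.inl rfl)
    have hy2 : x + ((-1) * ε) • d ∈ K := hmem (-1) (Or.inr rfl)
    have hseg : x ∈ openSegment ℝ (x + (1 * ε) • d) (x + ((-1) * ε) • d) := by
      refine ⟨1/2, 1/2, by norm_num, by norm_num, by norm_num, ?_⟩
      funext k
      simp only [Pi.add_apply, Pi.smul_apply, smul_eq_mul]
      ring
    have := hxprop hy1 hy2 hseg
    have hdi : d i = 1 := by simp [hd, hij]
    have hcf := congrFun this i
    simp only [Pi.add_apply, Pi.smul_apply, smul_eq_mul] at hcf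
    rw [hdi] at hcf
    nlinarith
  -- finiteness of V
  have hVfin : V.Finite := by
    apply Set.Finite.subset
      (Set.finite_range fun σ : Equiv.Perm (Fin r) => fun i => (s (σ i) : ℝ))
    rintro x ⟨σ, hσ⟩
    exact ⟨σ, (funext fun i => (hσ i).symm)⟩
  apply Set.Subset.antisymm
  · exact convexHull_min hVK hKconv
  · calc K = closure (convexHull ℝ (K.extremePoints ℝ)) :=
        (closure_convexHull_extremePoints hKcomp hKconv).symm
      _ ⊆ closure (convexHull ℝ V) := closure_mono (convexHull_mono hextV)
      _ = convexHull ℝ V := ((hVfin.isCompact_convexHull (𝕜 := ℝ)).isClosed).closure_eq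
end

section
/- Let S = (s_1 < ⋯ < s_r) be a strictly increasing sequence of positive integers, and let 𝔭 = (P_1,…,P_{k+1}) be an ordered partition of {1,…,r} with m_j = |P_1| + ⋯ + |P_j| and S_j = (s_{m_{j−1}+1},…,s_{m_j}) for j = 1,…,k+1. Then the map sending x ∈ ℝ^r to the tuple whose j-th entry lists the coordinates of x indexed by P_j in increasing index order restricts to a bijection from the face Π_𝔭 onto the product of permutohedra Π_{S_1} × Π_{S_2} × ⋯ × Π_{S_{k+1}}. -/
open Finset

/-- A strictly monotone map `Fin m → ℕ` satisfies `i ≤ f i`. -/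
lemma strictMono_fin_le {m : ℕ} (f : Fin m → ℕ) (hf : StrictMono f) (i : Fin m) :
    (i : ℕ) ≤ f i := by
  obtain ⟨v, hv⟩ := i
  induction v with
  | zero => exact Nat.zero_le _
  | succ p ih =>
    have hp : p < m := Nat.lt_of_succ_lt hv
    have h1 : f ⟨p, hp⟩ < f ⟨p + 1, hv⟩ := hf (by simp [Fin.lt_def])
    have h2 : p ≤ f ⟨p, hp⟩ := by simpa using ih hp
    simpa using Nat.succ_le_of_lt (lt_of_le_of_lt h2 h1)

/-- Sum over a finset via its order embedding enumeration. -/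
lemma sum_eq_sum_orderEmbOfFin {α M : Type*} [LinearOrder α] [AddCommMonoid M]
    (T : Finset α) (g : α → M) :
    ∑ u ∈ T, g u = ∑ i : Fin T.card, g (T.orderEmbOfFin rfl i) := by
  classical
  have himg : Finset.image (T.orderEmbOfFin rfl) Finset.univ = T := by
    apply Finset.coe_injective
    rw [Finset.coe_image, Finset.coe_univ, Set.image_univ]
    exact T.range_orderEmbOfFin rfl
  conv_lhs => rw [← himg]
  exact Finset.sum_image fun a _ b _ h => (T.orderEmbOfFin rfl).injective h

/-- Sum of `s` over a finset of naturals of cardinality `m` is at least the sum over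
`range m`, with equality only for `range m` itself. -/
lemma sum_values_ge {s : ℕ → ℕ} (hs : StrictMono s) (T : Finset ℕ) :
    (∑ i ∈ Finset.range T.card, s i) ≤ ∑ i ∈ T, s i ∧
      (∑ i ∈ T, s i = ∑ i ∈ Finset.range T.card, s i → T = Finset.range T.card) := by
  classical
  set m := T.card with hm
  have hf : StrictMono (T.orderEmbOfFin (rfl : T.card = m)) := (T.orderEmbOfFin rfl).strictMono
  have hsum : ∑ i ∈ T, s i = ∑ i : Fin m, s (T.orderEmbOfFin rfl i) :=
    sum_eq_sum_orderEmbOfFin T s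
  have hr : ∑ i ∈ Finset.range m, s i = ∑ i : Fin m, s i :=
    (Fin.sum_univ_eq_sum_range s m).symm
  have hle : ∀ i : Fin m, s (i : ℕ) ≤ s (T.orderEmbOfFin rfl i) :=
    fun i => hs.monotone (strictMono_fin_le _ hf i)
  constructor
  · rw [hsum, hr]
    exact Finset.sum_le_sum fun i _ => hle i
  · intro heq
    by_contra hne
    have hexists : ∃ i : Fin m, T.orderEmbOfFin rfl i ≠ (i : ℕ) := by
      by_contra hall
      push_neg at hall
      apply hne
      apply Finset.coe_injective
      rw [← T.range_orderEmbOfFin (rfl : T.card = m)]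
      ext u
      simp only [Set.mem_range, Finset.coe_range, Set.mem_Iio]
      constructor
      · rintro ⟨i, rfl⟩; rw [hall i]; exact i.2
      · intro hu; exact ⟨⟨u, hu⟩, hall ⟨u, hu⟩⟩
    obtain ⟨i0, hi0⟩ := hexists
    have hlt : s (i0 : ℕ) < s (T.orderEmbOfFin rfl i0) :=
      hs (lt_of_le_of_ne (strictMono_fin_le _ hf i0) (Ne.symm hi0))
    have : ∑ i : Fin m, s (i : ℕ) < ∑ i : Fin m, s (T.orderEmbOfFin rfl i) :=
      Finset.sum_lt_sum (fun i _ => hle i) ⟨i0, Finset.mem_univ _, hlt⟩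
    rw [← hsum, ← hr] at this
    omega

/-- Rearrangement: concatenating consecutive blocks of sums. -/
lemma sum_blocks_eq (sR : ℕ → ℝ) (c : ℕ → ℕ) (p : ℕ) :
    ∑ a ∈ Finset.range p, ∑ i ∈ Finset.range (c a), sR ((∑ b ∈ Finset.range a, c b) + i) =
      ∑ i ∈ Finset.range (∑ a ∈ Finset.range p, c a), sR i := by
  induction p with
  | zero => simp
  | succ q ih =>
    rw [Finset.sum_range_succ, ih, Finset.sum_range_succ (fun a => c a) q,
      Finset.sum_range_add]

/-- Translation of a sum over `Fin (k+1)` indices with value `< n` to a range sum. -/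
lemma sum_filter_val_lt {M : Type*} [AddCommMonoid M] {k n : ℕ} (hn : n ≤ k + 1)
    (F : Fin (k + 1) → M) (F' : ℕ → M) (hF : ∀ a (h : a < k + 1), F' a = F ⟨a, h⟩) :
    ∑ j' ∈ Finset.univ.filter (fun j' : Fin (k + 1) => (j' : ℕ) < n), F j' =
      ∑ a ∈ Finset.range n, F' a := by
  refine Finset.sum_nbij' (i := fun j' : Fin (k + 1) => (j' : ℕ))
    (j := fun a => (⟨a % (k + 1), Nat.mod_lt _ (Nat.succ_pos k)⟩ : Fin (k + 1)))
    ?_ ?_ ?_ ?_ ?_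
  · intro a ha
    simp only [Finset.mem_filter] at ha
    exact Finset.mem_range.mpr ha.2
  · intro a ha
    have ha' := Finset.mem_range.mp ha
    have : a % (k + 1) = a := Nat.mod_eq_of_lt (lt_of_lt_of_le ha' hn)
    simp [this, ha']
  · intro a _; exact Fin.ext (Nat.mod_eq_of_lt a.2)
  · intro a ha
    exact Nat.mod_eq_of_lt (lt_of_lt_of_le (Finset.mem_range.mp ha) hn)
  · intro a _
    rw [hF a a.2]

/-- Key inequality: sum of permuted values over a set dominates the sum of the smallest
values, with equality characterization. -/
lemma vertex_block_sum {r : ℕ} {s : ℕ → ℕ} (hmono : StrictMono s)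
    (σ : Equiv.Perm (Fin r)) (B : Finset (Fin r)) :
    (∑ i ∈ Finset.range B.card, (s i : ℝ)) ≤ ∑ i ∈ B, (s (σ i) : ℝ) ∧
      ((∑ i ∈ B, (s (σ i) : ℝ)) = ∑ i ∈ Finset.range B.card, (s i : ℝ) →
        Finset.image (fun i => ((σ i : Fin r) : ℕ)) B = Finset.range B.card) := by
  classical
  have hinj : Function.Injective (fun i : Fin r => ((σ i : Fin r) : ℕ)) :=
    Fin.val_injective.comp σ.injective
  set T := B.image fun i : Fin r => ((σ i : Fin r) : ℕ) with hT
  have hcT : T.card = B.card := Finset.card_image_of_injective _ hinj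
  have hsT : ∑ u ∈ T, (s u : ℝ) = ∑ i ∈ B, (s (σ i) : ℝ) :=
    Finset.sum_image fun a _ b _ h => hinj h
  obtain ⟨h1, h2⟩ := sum_values_ge hmono T
  rw [hcT] at h1 h2
  constructor
  · calc (∑ i ∈ Finset.range B.card, (s i : ℝ))
        = ((∑ i ∈ Finset.range B.card, s i : ℕ) : ℝ) := by push_cast; rfl
      _ ≤ ((∑ u ∈ T, s u : ℕ) : ℝ) := Nat.cast_le.mpr h1
      _ = ∑ u ∈ T, (s u : ℝ) := by push_cast; rfl
      _ = _ := hsT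
  · intro heq
    apply h2
    have hcast : ((∑ u ∈ T, s u : ℕ) : ℝ) = ((∑ i ∈ Finset.range B.card, s i : ℕ) : ℝ) := by
      push_cast
      exact hsT.trans heq
    exact Nat.cast_injective hcast

/-- Every point of a permutohedron has coordinate sum equal to the sum of the values. -/
lemma permutohedron_sum_coords {n : ℕ} (sv : ℕ → ℝ) {y : Fin n → ℝ}
    (hy : y ∈ permutohedron n sv) :
    ∑ p, y p = ∑ i ∈ Finset.range n, sv i := by
  have hsub : permutohedron n sv ⊆ {z : Fin n → ℝ | ∑ p, z p = ∑ i ∈ Finset.range n, sv i} := by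
    apply convexHull_min
    · rintro z ⟨π, hπ⟩
      show ∑ p, z p = _
      calc ∑ p, z p = ∑ p, sv ((π p : Fin n) : ℕ) := by
            exact Finset.sum_congr rfl fun p _ => hπ p
        _ = ∑ p : Fin n, sv (p : ℕ) := Equiv.sum_comp π (fun p : Fin n => sv (p : ℕ))
        _ = ∑ i ∈ Finset.range n, sv i := Fin.sum_univ_eq_sum_range sv n
    · exact convex_hyperplane
        ⟨fun a b => by simp [Finset.sum_add_distrib],
         fun c a => by simp [Finset.mul_sum]⟩ _
  exact hsub hy

set_option maxHeartbeats 1000000 in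
/-- Let `𝔭 = (P_1,…,P_{k+1})` be an ordered partition of `{1,…,r}`
(here `Q : Fin (k+1) → Finset (Fin r)`, each block nonempty, pairwise disjoint, covering).
With `m_j = |P_1| + ⋯ + |P_j|` and `S_j = (s_{m_{j-1}+1},…,s_{m_j})`, the map sending `x` to
the tuple whose `j`-th entry lists the coordinates of `x` indexed by `P_j` in increasing
index order restricts to a bijection from the face `Π_𝔭` (cut out inside `Π_S` by the
equalities `∑_{i ∈ P_1 ∪ ⋯ ∪ P_j} x_i = τ_{m_j}`) onto the product
`Π_{S_1} × ⋯ × Π_{S_{k+1}}`. -/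
theorem partitionFace_bijOn_prod_permutohedra (r k : ℕ) (s : ℕ → ℕ)
    (hmono : StrictMono s) (hpos : ∀ i, 0 < s i)
    (Q : Fin (k + 1) → Finset (Fin r))
    (hne : ∀ j, (Q j).Nonempty)
    (hdisj : ∀ j j', j ≠ j' → Disjoint (Q j) (Q j'))
    (hcover : Finset.univ.biUnion Q = (Finset.univ : Finset (Fin r))) :
    Set.BijOn
      (fun (x : Fin r → ℝ) (j : Fin (k + 1)) (i : Fin (Q j).card) =>
        x ((Q j).orderEmbOfFin rfl i))
      (permutohedron r (fun i => (s i : ℝ)) ∩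
        ⋂ j : Fin (k + 1),
          {x : Fin r → ℝ |
            ∑ i ∈ (Finset.univ.filter (fun j' => j' ≤ j)).biUnion Q, x i =
              ∑ i ∈ Finset.range
                  (∑ j' ∈ Finset.univ.filter (fun j' => j' ≤ j), (Q j').card),
                (s i : ℝ)})
      (Set.univ.pi fun j : Fin (k + 1) =>
        permutohedron (Q j).card fun i =>
          (s ((∑ j' ∈ Finset.univ.filter (fun j' => j' < j), (Q j').card) + i) : ℝ)) := by
  classical
  -- basic block membership facts
  have hblock : ∀ i : Fin r, ∃ j, i ∈ Q j := by
    intro i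
    have : i ∈ Finset.univ.biUnion Q := hcover ▸ Finset.mem_univ i
    simpa [Finset.mem_biUnion] using this
  have hcardsum : ∑ j, (Q j).card = r := by
    have h := Finset.card_biUnion
      (s := (Finset.univ : Finset (Fin (k + 1)))) (t := Q)
      (fun x _ y _ h => hdisj x y h)
    rw [hcover] at h
    simpa using h.symm
  -- the global assembly bijection
  have hFinj : Function.Injective
      (fun p : Σ j : Fin (k + 1), Fin (Q j).card => (Q p.1).orderEmbOfFin rfl p.2) := by
    rintro ⟨j, i⟩ ⟨j', i'⟩ h
    dsimp only at h
    have hmem : (Q j).orderEmbOfFin rfl i ∈ Q j := Finset.orderEmbOfFin_mem _ rfl i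
    have hmem' : (Q j').orderEmbOfFin rfl i' ∈ Q j' := Finset.orderEmbOfFin_mem _ rfl i'
    have hjj : j = j' := by
      by_contra hne'
      exact Finset.disjoint_left.mp (hdisj j j' hne') hmem (h ▸ hmem')
    subst hjj
    have : i = i' := ((Q j).orderEmbOfFin rfl).injective h
    rw [this]
  obtain ⟨E, hE⟩ : ∃ E : (Σ j : Fin (k + 1), Fin (Q j).card) ≃ Fin r,
      ∀ (j : Fin (k + 1)) (i : Fin (Q j).card), E ⟨j, i⟩ = (Q j).orderEmbOfFin rfl i := by
    refine ⟨Equiv.ofBijective _ ((Fintype.bijective_iff_injective_and_card _).mpr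
      ⟨hFinj, ?_⟩), fun j i => rfl⟩
    simp [hcardsum]
  have hEsymm : ∀ (j : Fin (k + 1)) (i : Fin (Q j).card),
      E.symm ((Q j).orderEmbOfFin rfl i) = ⟨j, i⟩ := by
    intro j i
    rw [← hE j i, Equiv.symm_apply_apply]
  -- arithmetic on prefix sums
  have htm : ∀ j : Fin (k + 1),
      (∑ j' ∈ Finset.univ.filter (fun j' => j' ≤ j), (Q j').card) =
        (∑ j' ∈ Finset.univ.filter (fun j' => j' < j), (Q j').card) + (Q j).card := by
    intro j
    have hins : Finset.univ.filter (fun j' => j' ≤ j) =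
        insert j (Finset.univ.filter (fun j' => j' < j)) := by
      ext j'
      simp only [Finset.mem_insert, Finset.mem_filter, Finset.mem_univ, true_and]
      constructor
      · intro h; rcases lt_or_eq_of_le h with h | h
        · exact Or.inr h
        · exact Or.inl h
      · rintro (rfl | h); · exact le_refl _
        · exact le_of_lt h
    rw [hins, Finset.sum_insert (by simp), add_comm]
  have hmt : ∀ j j' : Fin (k + 1), j < j' →
      (∑ a ∈ Finset.univ.filter (fun a => a ≤ j), (Q a).card) ≤
        ∑ a ∈ Finset.univ.filter (fun a => a < j'), (Q a).card := by
    intro j j' hjj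
    apply Finset.sum_le_sum_of_subset
    intro a ha
    simp only [Finset.mem_filter, Finset.mem_univ, true_and] at ha ⊢
    exact lt_of_le_of_lt ha hjj
  have htr : ∀ j : Fin (k + 1),
      (∑ a ∈ Finset.univ.filter (fun a => a ≤ j), (Q a).card) ≤ r := by
    intro j
    calc (∑ a ∈ Finset.univ.filter (fun a => a ≤ j), (Q a).card)
        ≤ ∑ a, (Q a).card := Finset.sum_le_sum_of_subset (Finset.filter_subset _ _)
      _ = r := hcardsum
  have hcardB : ∀ j : Fin (k + 1),
      ((Finset.univ.filter (fun j' => j' ≤ j)).biUnion Q).card =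
        ∑ j' ∈ Finset.univ.filter (fun j' => j' ≤ j), (Q j').card := by
    intro j
    exact Finset.card_biUnion (fun x _ y _ h => hdisj x y h)
  refine ⟨?_, ?_, ?_⟩
  · -- maps to
    rintro x ⟨hxhull, hxcap⟩
    have hxeq : ∀ j : Fin (k + 1),
        ∑ i ∈ (Finset.univ.filter (fun j' => j' ≤ j)).biUnion Q, x i =
          ∑ i ∈ Finset.range
              (∑ j' ∈ Finset.univ.filter (fun j' => j' ≤ j), (Q j').card), (s i : ℝ) :=
      fun j => Set.mem_iInter.mp hxcap j
    rw [permutohedron, _root_.convexHull_eq] at hxhull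
    obtain ⟨ι, tF, w, z, hw0, hw1, hz, hcm⟩ := hxhull
    have hxsum : ∀ i, x i = ∑ a ∈ tF, w a * z a i := by
      intro i
      rw [← hcm, Finset.centerMass_eq_of_sum_1 _ _ hw1]
      simp [Finset.sum_apply]
    have htight : ∀ a ∈ tF, w a ≠ 0 → ∀ j : Fin (k + 1),
        ∑ i ∈ (Finset.univ.filter (fun j' => j' ≤ j)).biUnion Q, z a i =
          ∑ i ∈ Finset.range
              (∑ j' ∈ Finset.univ.filter (fun j' => j' ≤ j), (Q j').card), (s i : ℝ) := by
      intro a ha hwa j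
      set B := (Finset.univ.filter (fun j' => j' ≤ j)).biUnion Q with hBdef
      set τ := ∑ i ∈ Finset.range
          (∑ j' ∈ Finset.univ.filter (fun j' => j' ≤ j), (Q j').card), (s i : ℝ) with hτdef
      have hBcard : B.card = ∑ j' ∈ Finset.univ.filter (fun j' => j' ≤ j), (Q j').card :=
        hcardB j
      have hge : ∀ b ∈ tF, τ ≤ ∑ i ∈ B, z b i := by
        intro b hb
        obtain ⟨σ, hσ⟩ := hz b hb
        have h1 := (vertex_block_sum hmono σ B).1
        have h2 : ∑ i ∈ B, z b i = ∑ i ∈ B, (s ((σ i : Fin r) : ℕ) : ℝ) :=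
          Finset.sum_congr rfl fun i _ => hσ i
        rw [h2]
        calc τ = ∑ i ∈ Finset.range B.card, (s i : ℝ) := by rw [hτdef, hBcard]
          _ ≤ _ := h1
      have hsum_wc : ∑ b ∈ tF, w b * (∑ i ∈ B, z b i) = τ := by
        calc ∑ b ∈ tF, w b * ∑ i ∈ B, z b i
            = ∑ b ∈ tF, ∑ i ∈ B, w b * z b i := by
              exact Finset.sum_congr rfl fun b _ => Finset.mul_sum _ _ _
          _ = ∑ i ∈ B, ∑ b ∈ tF, w b * z b i := Finset.sum_comm
          _ = ∑ i ∈ B, x i := Finset.sum_congr rfl fun i _ => (hxsum i).symm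
          _ = τ := hxeq j
      have hzero : ∑ b ∈ tF, w b * ((∑ i ∈ B, z b i) - τ) = 0 := by
        have hexp : ∑ b ∈ tF, w b * ((∑ i ∈ B, z b i) - τ) =
            (∑ b ∈ tF, w b * (∑ i ∈ B, z b i)) - (∑ b ∈ tF, w b) * τ := by
          rw [Finset.sum_mul, ← Finset.sum_sub_distrib]
          exact Finset.sum_congr rfl fun b _ => by ring
        rw [hexp, hsum_wc, hw1, one_mul, sub_self]
      have hterm := (Finset.sum_eq_zero_iff_of_nonneg
        (fun b hb => mul_nonneg (hw0 b hb) (sub_nonneg.mpr (hge b hb)))).mp hzero a ha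
      have hca : (∑ i ∈ B, z a i) - τ = 0 := by
        rcases mul_eq_zero.mp hterm with h | h
        · exact absurd h hwa
        · exact h
      linarith
    refine Set.mem_univ_pi.mpr fun j => ?_
    show (fun i => x ((Q j).orderEmbOfFin rfl i)) ∈ permutohedron (Q j).card
      (fun i => (s ((∑ j' ∈ Finset.univ.filter (fun j' => j' < j), (Q j').card) + i) : ℝ))
    have hw1' : ∑ b ∈ tF.filter (fun b => w b ≠ 0), w b = 1 := by
      rw [Finset.sum_filter_ne_zero]
      exact hw1
    have hfx : (fun i => x ((Q j).orderEmbOfFin rfl i)) =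
        ∑ b ∈ tF.filter (fun b => w b ≠ 0),
          w b • (fun i : Fin (Q j).card => z b ((Q j).orderEmbOfFin rfl i)) := by
      funext i
      rw [Finset.sum_apply]
      simp only [Pi.smul_apply, smul_eq_mul]
      rw [hxsum ((Q j).orderEmbOfFin rfl i)]
      refine (Finset.sum_subset (Finset.filter_subset _ _) fun b hb hnb => ?_).symm
      have hwb0 : w b = 0 := by
        by_contra h
        exact hnb (Finset.mem_filter.mpr ⟨hb, h⟩)
      rw [hwb0, zero_mul]
    rw [hfx, permutohedron]
    refine Convex.sum_mem (convex_convexHull ℝ _)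
      (fun b hb => hw0 b (Finset.mem_filter.mp hb).1) hw1' ?_
    intro b hb
    apply subset_convexHull
    obtain ⟨hbF, hwb⟩ := Finset.mem_filter.mp hb
    obtain ⟨σ, hσ⟩ := hz b hbF
    -- images of prefix unions are initial ranges
    have himB : ∀ j' : Fin (k + 1),
        Finset.image (fun i => ((σ i : Fin r) : ℕ))
            ((Finset.univ.filter (fun a => a ≤ j')).biUnion Q) =
          Finset.range (∑ a ∈ Finset.univ.filter (fun a => a ≤ j'), (Q a).card) := by
      intro j'
      have h2 := (vertex_block_sum hmono σ
        ((Finset.univ.filter (fun a => a ≤ j')).biUnion Q)).2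
      rw [hcardB j'] at h2
      apply h2
      calc ∑ i ∈ (Finset.univ.filter (fun a => a ≤ j')).biUnion Q, (s ((σ i : Fin r) : ℕ) : ℝ)
          = ∑ i ∈ (Finset.univ.filter (fun a => a ≤ j')).biUnion Q, z b i :=
            Finset.sum_congr rfl fun i _ => (hσ i).symm
        _ = _ := htight b hbF hwb j'
    -- bounds for indices in the block
    have hbound : ∀ i ∈ Q j,
        (∑ a ∈ Finset.univ.filter (fun a => a < j), (Q a).card) ≤ ((σ i : Fin r) : ℕ) ∧
          ((σ i : Fin r) : ℕ) < ∑ a ∈ Finset.univ.filter (fun a => a ≤ j), (Q a).card := by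
      intro i hi
      have hiB : i ∈ (Finset.univ.filter (fun a => a ≤ j)).biUnion Q :=
        Finset.mem_biUnion.mpr ⟨j, Finset.mem_filter.mpr ⟨Finset.mem_univ _, le_refl j⟩, hi⟩
      have hup : ((σ i : Fin r) : ℕ) <
          ∑ a ∈ Finset.univ.filter (fun a => a ≤ j), (Q a).card := by
        have hm : ((σ i : Fin r) : ℕ) ∈ Finset.image (fun i => ((σ i : Fin r) : ℕ))
            ((Finset.univ.filter (fun a => a ≤ j)).biUnion Q) :=
          Finset.mem_image_of_mem _ hiB
        rw [himB j] at hm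
        exact Finset.mem_range.mp hm
      refine ⟨?_, hup⟩
      by_contra hlt
      push_neg at hlt
      rcases Nat.eq_zero_or_pos j.val with h0 | hposj
      · have hempty : Finset.univ.filter (fun a : Fin (k + 1) => a < j) = ∅ := by
          apply Finset.filter_eq_empty_iff.mpr
          intro a _
          rw [Fin.lt_def, h0]
          omega
        rw [hempty] at hlt
        simp at hlt
      · have hjp : j.val - 1 < k + 1 := by omega
        have hfil : Finset.univ.filter (fun a : Fin (k + 1) => a < j) =
            Finset.univ.filter (fun a => a ≤ (⟨j.val - 1, hjp⟩ : Fin (k + 1))) := by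
          ext a
          simp only [Finset.mem_filter, Finset.mem_univ, true_and, Fin.lt_def, Fin.le_def]
          omega
        rw [hfil] at hlt
        have hmem' : ((σ i : Fin r) : ℕ) ∈ Finset.range
            (∑ a ∈ Finset.univ.filter
              (fun a => a ≤ (⟨j.val - 1, hjp⟩ : Fin (k + 1))), (Q a).card) :=
          Finset.mem_range.mpr hlt
        rw [← himB ⟨j.val - 1, hjp⟩] at hmem'
        obtain ⟨i', hi'B, hii⟩ := Finset.mem_image.mp hmem'
        have hii' : i' = i := σ.injective (Fin.val_injective hii)
        subst hii'
        obtain ⟨a, haf, hia⟩ := Finset.mem_biUnion.mp hi'B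
        have haj : a ≠ j := by
          have hale := (Finset.mem_filter.mp haf).2
          rw [Fin.le_def] at hale
          intro h
          subst h
          simp only [Fin.val_mk] at hale
          omega
        exact Finset.disjoint_left.mp (hdisj a j haj) hia hi
    have hcQ := htm j
    have hgmem : ∀ i : Fin (Q j).card,
        ((σ ((Q j).orderEmbOfFin rfl i) : Fin r) : ℕ) -
            (∑ a ∈ Finset.univ.filter (fun a => a < j), (Q a).card) < (Q j).card := by
      intro i
      have hb' := hbound _ (Finset.orderEmbOfFin_mem _ rfl i)
      omega
    set g : Fin (Q j).card → Fin (Q j).card := fun i =>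
      ⟨((σ ((Q j).orderEmbOfFin rfl i) : Fin r) : ℕ) -
        (∑ a ∈ Finset.univ.filter (fun a => a < j), (Q a).card), hgmem i⟩ with hgdef
    have hginj : Function.Injective g := by
      intro i i' h
      have hb1 := hbound _ (Finset.orderEmbOfFin_mem _ rfl i)
      have hb2 := hbound _ (Finset.orderEmbOfFin_mem _ rfl i')
      have hval : ((σ ((Q j).orderEmbOfFin rfl i) : Fin r) : ℕ) =
          ((σ ((Q j).orderEmbOfFin rfl i') : Fin r) : ℕ) := by
        have := congrArg Fin.val h
        simp only [hgdef] at this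
        omega
      exact ((Q j).orderEmbOfFin rfl).injective (σ.injective (Fin.val_injective hval))
    have hgbij := Finite.injective_iff_bijective.mp hginj
    refine ⟨Equiv.ofBijective g hgbij, fun i => ?_⟩
    show z b ((Q j).orderEmbOfFin rfl i) =
      (s ((∑ a ∈ Finset.univ.filter (fun a => a < j), (Q a).card) +
        ((Equiv.ofBijective g hgbij i : Fin (Q j).card) : ℕ)) : ℝ)
    have hval : ((Equiv.ofBijective g hgbij i : Fin (Q j).card) : ℕ) =
        ((σ ((Q j).orderEmbOfFin rfl i) : Fin r) : ℕ) -
          (∑ a ∈ Finset.univ.filter (fun a => a < j), (Q a).card) := rfl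
    rw [hσ ((Q j).orderEmbOfFin rfl i), hval]
    congr 2
    have hb' := hbound _ (Finset.orderEmbOfFin_mem _ rfl i)
    omega

  · -- injectivity
    intro x _ x' _ h
    funext i
    obtain ⟨j, hij⟩ := hblock i
    have hir : i ∈ Set.range ((Q j).orderEmbOfFin rfl) := by
      rw [Finset.range_orderEmbOfFin]
      exact hij
    obtain ⟨p, rfl⟩ := hir
    exact congrFun (congrFun h j) p
  · -- surjectivity
    intro y hy
    rw [Set.mem_univ_pi] at hy
    simp only [permutohedron] at hy
    refine ⟨fun i => y (E.symm i).1 (E.symm i).2, ⟨?_, ?_⟩, ?_⟩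
    · -- membership in the big permutohedron
      have hy'' : y ∈ convexHull ℝ (Set.univ.pi fun j : Fin (k + 1) =>
          {v : Fin (Q j).card → ℝ | ∃ π : Equiv.Perm (Fin (Q j).card), ∀ i,
            v i = (s ((∑ a ∈ Finset.univ.filter (fun a => a < j), (Q a).card) + (π i : ℕ)) : ℝ)}) := by
        rw [convexHull_pi]
        exact Set.mem_univ_pi.mpr fun j => hy j
      obtain ⟨L, hLdef⟩ : ∃ L : (∀ j : Fin (k + 1), Fin (Q j).card → ℝ) →ₗ[ℝ] (Fin r → ℝ),
          ∀ v, L v = fun i => v (E.symm i).1 (E.symm i).2 :=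
        ⟨LinearMap.pi (fun i : Fin r =>
          (LinearMap.proj (R := ℝ) (φ := fun _ : Fin (Q (E.symm i).1).card => ℝ)
              (E.symm i).2).comp
            (LinearMap.proj (R := ℝ) (φ := fun j : Fin (k + 1) => Fin (Q j).card → ℝ)
              (E.symm i).1)), fun v => rfl⟩
      have himg2 : (fun i => y (E.symm i).1 (E.symm i).2) ∈
          L '' (convexHull ℝ (Set.univ.pi fun j : Fin (k + 1) =>
          {v : Fin (Q j).card → ℝ | ∃ π : Equiv.Perm (Fin (Q j).card), ∀ i,
            v i = (s ((∑ a ∈ Finset.univ.filter (fun a => a < j), (Q a).card) + (π i : ℕ)) : ℝ)})) :=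
        ⟨y, hy'', hLdef y⟩
      rw [L.image_convexHull] at himg2
      rw [permutohedron]
      refine convexHull_mono ?_ himg2
      rintro _ ⟨v, hv, rfl⟩
      have hv' : ∀ j, ∃ π : Equiv.Perm (Fin (Q j).card), ∀ i,
          v j i = (s ((∑ a ∈ Finset.univ.filter (fun a => a < j), (Q a).card) + (π i : ℕ)) : ℝ) :=
        fun j => hv j (Set.mem_univ j)
      choose π hπ using hv'
      have hDlt : ∀ (p : Σ j : Fin (k + 1), Fin (Q j).card),
          (∑ a ∈ Finset.univ.filter (fun a => a < p.1), (Q a).card) + (π p.1 p.2 : ℕ) < r := by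
        intro p
        have h1 : (π p.1 p.2 : ℕ) < (Q p.1).card := (π p.1 p.2).2
        have h2 := htm p.1
        have h3 := htr p.1
        omega
      have hDinj : Function.Injective (fun p : Σ j : Fin (k + 1), Fin (Q j).card =>
          (⟨(∑ a ∈ Finset.univ.filter (fun a => a < p.1), (Q a).card) + (π p.1 p.2 : ℕ),
            hDlt p⟩ : Fin r)) := by
        rintro ⟨j1, i1⟩ ⟨j2, i2⟩ h
        have hval := congrArg Fin.val h
        simp only [Fin.val_mk] at hval
        have hineq : ∀ j1' j2' : Fin (k + 1), j1' < j2' → ∀ (i1' : Fin (Q j1').card)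
            (i2' : Fin (Q j2').card),
            (∑ a ∈ Finset.univ.filter (fun a => a < j1'), (Q a).card) + (π j1' i1' : ℕ) ≠
            (∑ a ∈ Finset.univ.filter (fun a => a < j2'), (Q a).card) + (π j2' i2' : ℕ) := by
          intro j1' j2' hlt i1' i2'
          have h1 : (π j1' i1' : ℕ) < (Q j1').card := (π j1' i1').2
          have h2 := htm j1'
          have h3 := hmt j1' j2' hlt
          omega
        have hj : j1 = j2 := by
          by_contra hne12
          rcases lt_or_gt_of_ne hne12 with hlt | hlt
          · exact hineq j1 j2 hlt i1 i2 hval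
          · exact hineq j2 j1 hlt i2 i1 hval.symm
        subst hj
        have hival : (π j1 i1 : ℕ) = (π j1 i2 : ℕ) := by omega
        have : i1 = i2 := (π j1).injective (Fin.val_injective hival)
        rw [this]
      have hDbij := (Fintype.bijective_iff_injective_and_card _).mpr
        ⟨hDinj, by simp [hcardsum]⟩
      refine ⟨E.symm.trans (Equiv.ofBijective _ hDbij), fun i => ?_⟩
      have h2 : (((E.symm.trans (Equiv.ofBijective _ hDbij)) i : Fin r) : ℕ) =
          (∑ a ∈ Finset.univ.filter (fun a => a < (E.symm i).1), (Q a).card) +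
            (π (E.symm i).1 (E.symm i).2 : ℕ) := rfl
      have h1 : L v i = v (E.symm i).1 (E.symm i).2 := congrFun (hLdef v) i
      rw [h1, hπ (E.symm i).1 (E.symm i).2, h2]
    · -- the hyperplane equalities
      refine Set.mem_iInter.mpr fun j => ?_
      show ∑ i ∈ (Finset.univ.filter (fun j' => j' ≤ j)).biUnion Q,
          (fun i => y (E.symm i).1 (E.symm i).2) i = _
      have hpd : Set.PairwiseDisjoint
          (↑(Finset.univ.filter (fun j' : Fin (k + 1) => j' ≤ j))) Q :=
        fun a _ b _ hab => hdisj a b hab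
      have hQsum : ∀ j' : Fin (k + 1),
          ∑ i ∈ Q j', (fun i => y (E.symm i).1 (E.symm i).2) i =
            ∑ i ∈ Finset.range (Q j').card,
              (s ((∑ a ∈ Finset.univ.filter (fun a => a < j'), (Q a).card) + i) : ℝ) := by
        intro j'
        rw [sum_eq_sum_orderEmbOfFin (Q j') (fun i => y (E.symm i).1 (E.symm i).2)]
        have hcg : ∀ p : Fin (Q j').card,
            (fun i => y (E.symm i).1 (E.symm i).2) ((Q j').orderEmbOfFin rfl p) = y j' p := by
          intro p
          show y (E.symm ((Q j').orderEmbOfFin rfl p)).1 (E.symm ((Q j').orderEmbOfFin rfl p)).2 = _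
          rw [hEsymm j' p]
        rw [Finset.sum_congr rfl fun p _ => hcg p]
        exact permutohedron_sum_coords _ (hy j')
      set c : ℕ → ℕ := fun a => if h : a < k + 1 then (Q ⟨a, h⟩).card else 0 with hcdef
      have hc : ∀ a (h : a < k + 1), c a = (Q ⟨a, h⟩).card := fun a h => by
        rw [hcdef]; exact dif_pos h
      have hfillt : ∀ j' : Fin (k + 1), Finset.univ.filter (fun a : Fin (k + 1) => a < j') =
          Finset.univ.filter (fun a : Fin (k + 1) => (a : ℕ) < j'.val) := by
        intro j'; ext a
        simp only [Finset.mem_filter, Finset.mem_univ, true_and, Fin.lt_def]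
      have hfille : Finset.univ.filter (fun a : Fin (k + 1) => a ≤ j) =
          Finset.univ.filter (fun a : Fin (k + 1) => (a : ℕ) < j.val + 1) := by
        ext a
        simp only [Finset.mem_filter, Finset.mem_univ, true_and, Fin.le_def, Nat.lt_succ_iff]
      have hm_trans : ∀ j' : Fin (k + 1),
          (∑ a ∈ Finset.univ.filter (fun a => a < j'), (Q a).card) =
            ∑ b ∈ Finset.range j'.val, c b := by
        intro j'
        rw [hfillt j']
        exact sum_filter_val_lt (by omega) _ c (fun a h => hc a h)
      have ht_trans : (∑ a ∈ Finset.univ.filter (fun a => a ≤ j), (Q a).card) =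
          ∑ b ∈ Finset.range (j.val + 1), c b := by
        rw [hfille]
        exact sum_filter_val_lt (by omega) _ c (fun a h => hc a h)
      have hFF : ∀ a (h : a < k + 1),
          (∑ i ∈ Finset.range (c a), (s ((∑ b ∈ Finset.range a, c b) + i) : ℝ)) =
            ∑ i ∈ Finset.range (Q (⟨a, h⟩ : Fin (k + 1))).card,
              (s ((∑ b ∈ Finset.univ.filter
                (fun b => b < (⟨a, h⟩ : Fin (k + 1))), (Q b).card) + i) : ℝ) := by
        intro a h
        rw [hm_trans ⟨a, h⟩, hc a h]
      have trans1 := sum_filter_val_lt (M := ℝ) (k := k) (n := j.val + 1) (by omega)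
        (fun j' => ∑ i ∈ Finset.range (Q j').card,
          (s ((∑ a ∈ Finset.univ.filter (fun a => a < j'), (Q a).card) + i) : ℝ))
        (fun a => ∑ i ∈ Finset.range (c a), (s ((∑ b ∈ Finset.range a, c b) + i) : ℝ))
        hFF
      calc ∑ i ∈ (Finset.univ.filter (fun j' => j' ≤ j)).biUnion Q,
            (fun i => y (E.symm i).1 (E.symm i).2) i
          = ∑ j' ∈ Finset.univ.filter (fun j' => j' ≤ j),
              ∑ i ∈ Q j', (fun i => y (E.symm i).1 (E.symm i).2) i :=
            Finset.sum_biUnion hpd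
        _ = ∑ j' ∈ Finset.univ.filter (fun j' => j' ≤ j),
              ∑ i ∈ Finset.range (Q j').card,
                (s ((∑ a ∈ Finset.univ.filter (fun a => a < j'), (Q a).card) + i) : ℝ) :=
            Finset.sum_congr rfl fun j' _ => hQsum j'
        _ = ∑ j' ∈ Finset.univ.filter (fun j' : Fin (k + 1) => (j' : ℕ) < j.val + 1),
              ∑ i ∈ Finset.range (Q j').card,
                (s ((∑ a ∈ Finset.univ.filter (fun a => a < j'), (Q a).card) + i) : ℝ) := by
            rw [← hfille]
        _ = ∑ a ∈ Finset.range (j.val + 1),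
              ∑ i ∈ Finset.range (c a), (s ((∑ b ∈ Finset.range a, c b) + i) : ℝ) := trans1
        _ = ∑ i ∈ Finset.range (∑ a ∈ Finset.range (j.val + 1), c a), (s i : ℝ) :=
            sum_blocks_eq (fun i => (s i : ℝ)) c (j.val + 1)
        _ = ∑ i ∈ Finset.range
              (∑ j' ∈ Finset.univ.filter (fun j' => j' ≤ j), (Q j').card), (s i : ℝ) := by
            rw [ht_trans]
    · -- the image is `y`
      funext j
      funext i
      show y (E.symm ((Q j).orderEmbOfFin rfl i)).1 (E.symm ((Q j).orderEmbOfFin rfl i)).2 = _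
      rw [hEsymm j i]
end

section
/- Let Π_{n−1} ⊂ ℝ^n be the permutohedron on (1,2,…,n) and let z ∈ Π_{n−1}. If I_1, I_2 ⊆ {1,…,n} are two subsets each satisfying ∑_{i∈I_j} z_i = |I_j|(|I_j|+1)/2, then I_1 ⊆ I_2 or I_2 ⊆ I_1. In other words, the family of subsets I ⊆ {1,…,n} with ∑_{i∈I} z_i = |I|(|I|+1)/2 is totally ordered by inclusion. -/
lemma sum_range_card_le (s : Finset ℕ) : ∑ i ∈ Finset.range s.card, i ≤ ∑ x ∈ s, x := by
  induction s using Finset.strongInduction with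
  | _ s ih =>
    rcases s.eq_empty_or_nonempty with rfl | hs
    · simp
    · have hmax := s.max'_mem hs
      set m := s.max' hs with hm
      have hcard : s.card ≤ m + 1 := by
        have hsub : s ⊆ Finset.range (m + 1) := fun x hx =>
          Finset.mem_range.mpr (Nat.lt_succ_of_le (Finset.le_max' s x hx))
        simpa using Finset.card_le_card hsub
      have h1 : (s.erase m).card = s.card - 1 := Finset.card_erase_of_mem hmax
      have h2 := ih _ (Finset.erase_ssubset hmax)
      have h3 : ∑ x ∈ s, x = m + ∑ x ∈ s.erase m, x := (Finset.add_sum_erase _ _ hmax).symm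
      have h4 : s.card = (s.card - 1) + 1 :=
        (Nat.succ_pred_eq_of_pos (Finset.card_pos.mpr hs)).symm
      have h5 : ∑ i ∈ Finset.range s.card, i
          = ∑ i ∈ Finset.range (s.card - 1), i + (s.card - 1) := by
        conv_lhs => rw [h4, Finset.sum_range_succ]
      rw [h1] at h2
      omega

/-- sum of (j+1) over a k-subset of Fin n is at least k(k+1)/2. -/
lemma sum_succ_lb {n : ℕ} (J : Finset (Fin n)) :
    (J.card : ℝ) * ((J.card : ℝ) + 1) / 2 ≤ ∑ j ∈ J, ((j : ℝ) + 1) := by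
  set s : Finset ℕ := J.image Fin.val with hs
  have hcard : s.card = J.card := Finset.card_image_of_injective _ Fin.val_injective
  have hsum : ∑ j ∈ J, ((j : ℕ) + 1) = ∑ x ∈ s, (x + 1) :=
    (Finset.sum_image (by intro a _ b _ h; exact Fin.val_injective h)).symm
  have h1 : ∑ i ∈ Finset.range s.card, i ≤ ∑ x ∈ s, x := sum_range_card_le s
  have h2 : (∑ i ∈ Finset.range s.card, i) * 2 = s.card * (s.card - 1) :=
    Finset.sum_range_id_mul_two _
  have key : J.card * (J.card + 1) ≤ 2 * ∑ j ∈ J, ((j : ℕ) + 1) := by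
    rw [hsum, Finset.sum_add_distrib, Finset.sum_const, smul_eq_mul, mul_one, ← hcard]
    have h3 : s.card * (s.card + 1) = s.card * (s.card - 1) + 2 * s.card := by
      cases s.card with
      | zero => simp
      | succ k => simp [Nat.succ_sub_one]; ring
    have h6 : s.card * (s.card - 1) ≤ (∑ x ∈ s, x) * 2 :=
      h2 ▸ Nat.mul_le_mul_right 2 h1
    rw [h3]
    nlinarith [h6]
  have : ((J.card * (J.card + 1) : ℕ) : ℝ) ≤ ((2 * ∑ j ∈ J, ((j : ℕ) + 1) : ℕ) : ℝ) := by
    exact_mod_cast key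
  push_cast at this
  have hc : ∑ j ∈ J, (((j : ℕ) : ℝ) + 1) = ∑ j ∈ J, ((j : ℝ) + 1) := rfl
  linarith [this, hc ▸ this]

/-- Key inequality: any point of the permutohedron satisfies the subset lower bounds. -/
lemma permutohedron_subset_lb {n : ℕ} {z : Fin n → ℝ}
    (hz : z ∈ permutohedron n (fun i => (i : ℝ) + 1)) (I : Finset (Fin n)) :
    (I.card : ℝ) * ((I.card : ℝ) + 1) / 2 ≤ ∑ i ∈ I, z i := by
  have hconv : Convex ℝ {x : Fin n → ℝ |
      (I.card : ℝ) * ((I.card : ℝ) + 1) / 2 ≤ ∑ i ∈ I, x i} := by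
    apply convex_halfSpace_ge
    constructor
    · intro a b; simp [Finset.sum_add_distrib]
    · intro c a; simp [Finset.mul_sum]
  have hsub : {x : Fin n → ℝ | ∃ σ : Equiv.Perm (Fin n), ∀ i, x i = (fun i => (i : ℝ) + 1) (σ i)}
      ⊆ {x : Fin n → ℝ | (I.card : ℝ) * ((I.card : ℝ) + 1) / 2 ≤ ∑ i ∈ I, x i} := by
    rintro x ⟨σ, hσ⟩
    have : ∑ i ∈ I, x i = ∑ j ∈ I.image σ, ((j : ℝ) + 1) := by
      rw [Finset.sum_image (by intro a _ b _ h; exact σ.injective h)]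
      exact Finset.sum_congr rfl fun i _ => hσ i
    have hcard : (I.image σ).card = I.card :=
      Finset.card_image_of_injective _ σ.injective
    rw [Set.mem_setOf_eq, this, ← hcard]
    exact sum_succ_lb _
  exact convexHull_min hsub hconv hz

/-- Let `Π_{n-1} ⊂ ℝ^n` be the permutohedron on `(1,2,…,n)` and `z ∈ Π_{n-1}`.
If `I₁, I₂ ⊆ {1,…,n}` both satisfy `∑_{i∈I} z_i = |I|(|I|+1)/2`, then `I₁ ⊆ I₂` or `I₂ ⊆ I₁`;
i.e. the family of such subsets is totally ordered by inclusion. -/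
theorem subsets_saturating_chain (n : ℕ) (z : Fin n → ℝ)
    (hz : z ∈ permutohedron n (fun i => (i : ℝ) + 1))
    (I₁ I₂ : Finset (Fin n))
    (h1 : ∑ i ∈ I₁, z i = (I₁.card : ℝ) * ((I₁.card : ℝ) + 1) / 2)
    (h2 : ∑ i ∈ I₂, z i = (I₂.card : ℝ) * ((I₂.card : ℝ) + 1) / 2) :
    I₁ ⊆ I₂ ∨ I₂ ⊆ I₁ := by
  have hu := permutohedron_subset_lb hz (I₁ ∪ I₂)
  have hi := permutohedron_subset_lb hz (I₁ ∩ I₂)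
  have hsum : ∑ i ∈ I₁ ∪ I₂, z i + ∑ i ∈ I₁ ∩ I₂, z i = ∑ i ∈ I₁, z i + ∑ i ∈ I₂, z i :=
    Finset.sum_union_inter
  set k1 := I₁.card; set k2 := I₂.card
  set u := (I₁ ∪ I₂).card; set m := (I₁ ∩ I₂).card
  have hcards : u + m = k1 + k2 := Finset.card_union_add_card_inter I₁ I₂
  have hu1 : k1 ≤ u := Finset.card_le_card Finset.subset_union_left
  have hu2 : k2 ≤ u := Finset.card_le_card Finset.subset_union_right
  -- real inequality: c(u) + c(m) ≤ c(k1) + c(k2)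
  have hreal : (u : ℝ) * (u + 1) / 2 + (m : ℝ) * (m + 1) / 2
      ≤ (k1 : ℝ) * (k1 + 1) / 2 + (k2 : ℝ) * (k2 + 1) / 2 := by
    rw [← h1, ← h2, ← hsum]; linarith
  have hcr : (u : ℝ) + m = k1 + k2 := by exact_mod_cast hcards
  -- deduce (u - k1)(u - k2) ≤ 0
  have hfac : ((u : ℝ) - k1) * ((u : ℝ) - k2) ≤ 0 := by nlinarith
  have hk1 : (k1 : ℝ) ≤ u := by exact_mod_cast hu1
  have hk2 : (k2 : ℝ) ≤ u := by exact_mod_cast hu2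
  have hprod : ((u : ℝ) - k1) * ((u : ℝ) - k2) = 0 :=
    le_antisymm hfac (mul_nonneg (by linarith) (by linarith))
  rcases mul_eq_zero.mp hprod with h | h
  · right
    have : u = k1 := by
      have h' : (u : ℝ) = k1 := by linarith
      exact_mod_cast h' 
    have heq : I₁ ∪ I₂ = I₁ :=
      (Finset.eq_of_subset_of_card_le Finset.subset_union_left (le_of_eq this)).symm
    intro x hx
    have : x ∈ I₁ ∪ I₂ := Finset.mem_union_right _ hx
    rwa [heq] at this
  · left
    have : u = k2 := by
      have h' : (u : ℝ) = k2 := by linarith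
      exact_mod_cast h' 
    have heq : I₁ ∪ I₂ = I₂ :=
      (Finset.eq_of_subset_of_card_le Finset.subset_union_right (le_of_eq this)).symm
    intro x hx
    have : x ∈ I₁ ∪ I₂ := Finset.mem_union_left _ hx
    rwa [heq] at this
end

section
/- Let G be a subgroup of the symmetric group on {1,…,n} acting on ℝ^n by permuting coordinates, (g·x)_{g(i)} = x_i, and let s be the number of orbits of G on {1,…,n}. Then the fixed-point set Π_{n−1}^G = {x ∈ Π_{n−1} : g·x = x for all g ∈ G} of the permutohedron Π_{n−1} is homeomorphic to the permutohedron Π_{s−1} ⊂ ℝ^s. -/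
open Set Metric MulAction Finset


lemma aux_homeo_ball {m d : ℕ} {A : Set (Fin m → ℝ)}
    (hco : Convex ℝ A) (hcp : IsCompact A) (hne : A.Nonempty)
    (hd : Module.finrank ℝ (vectorSpan ℝ A) = d) :
    Nonempty (↥A ≃ₜ ↥(Metric.closedBall (0 : Fin d → ℝ) 1)) := by
  obtain ⟨a₀, ha₀⟩ := hne
  set T : (Fin m → ℝ) ≃ₜ (Fin m → ℝ) := Homeomorph.addLeft (-a₀) with hT
  set A' : Set (Fin m → ℝ) := T '' A with hA'
  have h0 : (0 : Fin m → ℝ) ∈ A' := ⟨a₀, ha₀, by simp [hT]⟩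
  have hco' : Convex ℝ A' := hco.translate (-a₀)
  have hcp' : IsCompact A' := hcp.image T.continuous
  have hvs : vectorSpan ℝ A' = vectorSpan ℝ A := by
    rw [vectorSpan_def, vectorSpan_def]
    congr 1
    ext z
    simp only [Set.mem_vsub]
    constructor
    · rintro ⟨x, ⟨u, hu, rfl⟩, y, ⟨v, hv, rfl⟩, rfl⟩
      exact ⟨u, hu, v, hv, by simp [hT]⟩
    · rintro ⟨u, hu, v, hv, rfl⟩
      exact ⟨T u, ⟨u, hu, rfl⟩, T v, ⟨v, hv, rfl⟩, by simp [hT]⟩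
  have hAW : A' ⊆ (vectorSpan ℝ A' : Set (Fin m → ℝ)) := fun x hx => by
    simpa using vsub_mem_vectorSpan ℝ hx h0
  have hdW : Module.finrank ℝ (vectorSpan ℝ A') = d := by rw [hvs, hd]
  have : Module.finrank ℝ (Fin d → ℝ) = d := by simp
  let e : (vectorSpan ℝ A') ≃ₗ[ℝ] (Fin d → ℝ) := LinearEquiv.ofFinrankEq _ _ (by rw [hdW, this])
  obtain ⟨f, hf⟩ := LinearMap.exists_extend e.toLinearMap
  have hfW : ∀ w : vectorSpan ℝ A', f w = e w := fun w => by
    have := congrFun (congrArg DFunLike.coe hf) w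
    simpa using this
  have hfc : Continuous f := f.continuous_of_finiteDimensional
  have hinj : Set.InjOn f (vectorSpan ℝ A' : Set (Fin m → ℝ)) := by
    intro x hx y hy hxy
    have : e ⟨x, hx⟩ = e ⟨y, hy⟩ := by rw [← hfW ⟨x, hx⟩, ← hfW ⟨y, hy⟩]; exact hxy
    exact congrArg Subtype.val (e.injective this)
  set B' : Set (Fin d → ℝ) := f '' A' with hB'
  have hB'co : Convex ℝ B' := hco'.linear_image f
  have hB'cp : IsCompact B' := hcp'.image hfc
  have hB'ne : B'.Nonempty := ⟨f 0, 0, h0, rfl⟩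
  have hspan : affineSpan ℝ B' = ⊤ := by
    rw [AffineSubspace.affineSpan_eq_top_iff_vectorSpan_eq_top_of_nonempty ℝ _ _ hB'ne]
    rw [eq_top_iff]
    intro z _
    have h1 : z ∈ Submodule.map f (vectorSpan ℝ A') := by
      refine ⟨e.symm z, (e.symm z).2, ?_⟩
      rw [hfW (e.symm z)]; simp
    have h2 : Submodule.map f (vectorSpan ℝ A') ≤ vectorSpan ℝ B' := by
      rw [vectorSpan_def, vectorSpan_def, Submodule.map_span]
      apply Submodule.span_mono
      rintro _ ⟨w, hw, rfl⟩
      rw [Set.mem_vsub] at hw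
      obtain ⟨x, hx, y, hy, rfl⟩ := hw
      exact Set.mem_vsub.2 ⟨f x, ⟨x, hx, rfl⟩, f y, ⟨y, hy, rfl⟩, by simp⟩
    exact h2 h1
  have hB'int : (interior B').Nonempty :=
    (hB'co.interior_nonempty_iff_affineSpan_eq_top).mpr hspan
  have htco : Convex ℝ (Metric.closedBall (0 : Fin d → ℝ) 1) := convex_closedBall _ _
  have htint : (interior (Metric.closedBall (0 : Fin d → ℝ) 1)).Nonempty := by
    exact ⟨0, ball_subset_interior_closedBall (by simp)⟩
  obtain ⟨h, -, hcl, -⟩ := exists_homeomorph_image_eq hB'co hB'int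
    (NormedSpace.isVonNBounded_of_isBounded _ hB'cp.isBounded)
    htco htint
    (NormedSpace.isVonNBounded_of_isBounded _ isBounded_closedBall)
  rw [hB'cp.isClosed.closure_eq, Metric.isClosed_closedBall.closure_eq] at hcl
  -- assemble
  let e1 : ↥A ≃ₜ ↥A' := T.image A
  haveI : CompactSpace ↥A' := isCompact_iff_compactSpace.mp hcp'
  let eq2 : ↥A' ≃ ↥B' := Equiv.Set.imageOfInjOn f A' (hinj.mono hAW)
  have hcont2 : Continuous eq2 := by
    apply Continuous.subtype_mk
    exact hfc.comp continuous_subtype_val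
  let e2 : ↥A' ≃ₜ ↥B' := Continuous.homeoOfEquivCompactToT2 (f := eq2) hcont2
  let e3 : ↥B' ≃ₜ ↥(Metric.closedBall (0 : Fin d → ℝ) 1) :=
    (h.image B').trans (Homeomorph.setCongr hcl)
  exact ⟨e1.trans (e2.trans e3)⟩

namespace PermAux

noncomputable section

/-- vertex of the permutohedron -/
def vtx (m : ℕ) (σ : Equiv.Perm (Fin m)) : Fin m → ℝ := fun i => ((σ i : ℕ) : ℝ) + 1

lemma perm_eq (m : ℕ) :
    permutohedron m (fun i => (i : ℝ) + 1) = convexHull ℝ (Set.range (vtx m)) := by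
  unfold permutohedron
  congr 1
  ext x
  constructor
  · rintro ⟨σ, h⟩; exact ⟨σ, (funext h).symm⟩
  · rintro ⟨σ, rfl⟩; exact ⟨σ, fun i => rfl⟩

/-- the coordinate-sum linear functional -/
def sumF (m : ℕ) : (Fin m → ℝ) →ₗ[ℝ] ℝ where
  toFun x := ∑ i, x i
  map_add' x y := by simp [Finset.sum_add_distrib]
  map_smul' c x := by simp [Finset.mul_sum]

lemma convex_perm (m : ℕ) (s : ℕ → ℝ) : Convex ℝ (permutohedron m s) :=
  convex_convexHull ℝ _

lemma isCompact_perm (m : ℕ) : IsCompact (permutohedron m (fun i => (i : ℝ) + 1)) := by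
  rw [perm_eq]
  exact (Set.finite_range _).isCompact_convexHull (𝕜 := ℝ)

lemma sum_vtx (m : ℕ) (σ : Equiv.Perm (Fin m)) : sumF m (vtx m σ) = sumF m (vtx m 1) := by
  show ∑ i, ((((σ i : Fin m) : ℕ) : ℝ) + 1) = _
  rw [Equiv.sum_comp σ (fun j : Fin m => ((j : ℕ) : ℝ) + 1)]
  simp [sumF, vtx]

lemma sum_of_mem_perm {m : ℕ} {x : Fin m → ℝ}
    (hx : x ∈ permutohedron m (fun i => (i : ℝ) + 1)) :
    sumF m x = sumF m (vtx m 1) := by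
  rw [perm_eq] at hx
  have hsub : Set.range (vtx m) ⊆ {y | sumF m y = sumF m (vtx m 1)} := by
    rintro _ ⟨σ, rfl⟩; exact sum_vtx m σ
  have hconv : Convex ℝ {y : Fin m → ℝ | sumF m y = sumF m (vtx m 1)} :=
    convex_hyperplane (sumF m).isLinear _
  exact convexHull_min hsub hconv hx

variable {n : ℕ} (G : Subgroup (Equiv.Perm (Fin n))) [Fintype ↥G]

/-- the submodule of `G`-fixed vectors -/
def fixL : Submodule ℝ (Fin n → ℝ) where
  carrier := {x | ∀ g ∈ G, ∀ i, x (g i) = x i}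
  add_mem' := fun hx hy g hg i => by simp [hx g hg i, hy g hg i]
  zero_mem' := fun g hg i => rfl
  smul_mem' := fun c x hx g hg i => by simp [hx g hg i]

/-- the fixed-point set of the permutohedron -/
def F : Set (Fin n → ℝ) :=
  permutohedron n (fun i => (i : ℝ) + 1) ∩ {x | ∀ g ∈ G, ∀ i : Fin n, x (g i) = x i}

lemma cardG_ne : ((Nat.card ↥G : ℝ)) ≠ 0 := by
  have : 0 < Nat.card ↥G := Nat.card_pos
  exact_mod_cast this.ne'

/-- average of the `G`-translates of a vertex -/
def avg (σ : Equiv.Perm (Fin n)) : Fin n → ℝ :=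
  (Nat.card ↥G : ℝ)⁻¹ • ∑ g : ↥G, vtx n (σ * (g : Equiv.Perm (Fin n)))

lemma avg_mem (σ : Equiv.Perm (Fin n)) :
    avg G σ ∈ permutohedron n (fun i => (i : ℝ) + 1) := by
  rw [perm_eq, avg, Finset.smul_sum]
  refine (convex_convexHull ℝ _).sum_mem (fun i _ => by positivity) ?_
    (fun g _ => subset_convexHull ℝ _ ⟨σ * g, rfl⟩)
  rw [Finset.sum_const, Finset.card_univ, ← Nat.card_eq_fintype_card, nsmul_eq_mul,
    mul_inv_cancel₀ (cardG_ne G)]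

lemma avg_fix (σ : Equiv.Perm (Fin n)) : ∀ g ∈ G, ∀ i, avg G σ (g i) = avg G σ i := by
  intro g hg i
  simp only [avg, Pi.smul_apply, Finset.sum_apply, smul_eq_mul]
  congr 1
  exact Fintype.sum_equiv (Equiv.mulRight (⟨g, hg⟩ : ↥G))
    (fun b => vtx n (σ * (b : Equiv.Perm (Fin n))) (g i))
    (fun b => vtx n (σ * (b : Equiv.Perm (Fin n))) i)
    (fun b => by simp [vtx, Equiv.Perm.mul_apply])

lemma avg_mem_F (σ : Equiv.Perm (Fin n)) : avg G σ ∈ F G := ⟨avg_mem G σ, avg_fix G σ⟩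

/-- number of `g ∈ G` with `g i = a` -/
def cnt (a i : Fin n) : ℕ :=
  (Finset.univ.filter (fun g : ↥G => (g : Equiv.Perm (Fin n)) i = a)).card

lemma cnt_sum (i : Fin n) : ∑ a, cnt G a i = Fintype.card ↥G := by
  rw [← Finset.card_univ (α := ↥G),
    Finset.card_eq_sum_card_fiberwise (f := fun g : ↥G => (g : Equiv.Perm (Fin n)) i)
      (fun g _ => Finset.mem_univ _)]
  rfl

lemma cnt_exists {a i : Fin n} (h : cnt G a i ≠ 0) : ∃ g ∈ G, g i = a := by
  obtain ⟨g, hg⟩ := Finset.card_ne_zero.1 h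
  rw [Finset.mem_filter] at hg
  exact ⟨(g : Equiv.Perm (Fin n)), g.2, hg.2⟩

/-- difference-of-counts vector -/
def vab (a b : Fin n) : Fin n → ℝ := fun i => (cnt G a i : ℝ) - (cnt G b i : ℝ)

lemma vab_mem (a b : Fin n) : vab G a b ∈ vectorSpan ℝ (F G) := by
  rcases eq_or_ne a b with rfl | hab
  · have : vab G a a = 0 := by funext i; simp [vab]
    rw [this]; exact Submodule.zero_mem _
  · set τ := Equiv.swap a b with hτ
    set c : ℝ := (((b : ℕ) : ℝ) + 1) - (((a : ℕ) : ℝ) + 1) with hc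
    have hcne : c ≠ 0 := by
      rw [hc]
      have : ((a : ℕ) : ℝ) ≠ ((b : ℕ) : ℝ) := by
        exact_mod_cast fun h => hab (Fin.val_injective h)
      intro h; apply this; linarith [sub_eq_zero.1 h]
    have hdiff : avg G τ - avg G 1 = ((Nat.card ↥G : ℝ)⁻¹ * c) • vab G a b := by
      funext i
      simp only [Pi.sub_apply, avg, Pi.smul_apply, Finset.sum_apply, smul_eq_mul,
        Pi.smul_apply, vab]
      rw [← mul_sub, ← Finset.sum_sub_distrib, mul_assoc]
      congr 1
      have key : ∀ g : ↥G, vtx n (τ * (g : Equiv.Perm (Fin n))) i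
          - vtx n (1 * (g : Equiv.Perm (Fin n))) i
          = c * ((if (g : Equiv.Perm (Fin n)) i = a then (1 : ℝ) else 0)
              - (if (g : Equiv.Perm (Fin n)) i = b then (1 : ℝ) else 0)) := by
        intro g
        simp only [vtx, Equiv.Perm.mul_apply, Equiv.Perm.one_apply]
        rcases eq_or_ne ((g : Equiv.Perm (Fin n)) i) a with h | h
        · rw [h, if_pos rfl, if_neg hab, Equiv.swap_apply_left]
          rw [hc]; ring
        · rcases eq_or_ne ((g : Equiv.Perm (Fin n)) i) b with h' | h'
          · rw [h', if_neg hab.symm, if_pos rfl, Equiv.swap_apply_right]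
            rw [hc]; ring
          · rw [if_neg h, if_neg h', Equiv.swap_apply_of_ne_of_ne h h']
            ring
      rw [Finset.sum_congr rfl (fun g _ => key g), ← Finset.mul_sum]
      congr 1
      rw [Finset.sum_sub_distrib, Finset.sum_boole, Finset.sum_boole]
      rfl
    have hmem : avg G τ - avg G 1 ∈ vectorSpan ℝ (F G) :=
      vsub_mem_vectorSpan ℝ (avg_mem_F G τ) (avg_mem_F G 1)
    have h2 := Submodule.smul_mem (vectorSpan ℝ (F G)) ((Nat.card ↥G : ℝ)⁻¹ * c)⁻¹ hmem
    rw [hdiff, inv_smul_smul₀ (by simp [cardG_ne G, hcne, (cardG_ne G)];) ] at h2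
    exact h2

lemma vectorSpan_F_eq :
    vectorSpan ℝ (F G) = fixL G ⊓ LinearMap.ker (sumF n) := by
  apply le_antisymm
  · rw [vectorSpan_def]
    rw [Submodule.span_le]
    rintro z hz
    rw [Set.mem_vsub] at hz
    obtain ⟨x, hx, y, hy, rfl⟩ := hz
    refine Submodule.mem_inf.2 ⟨Submodule.sub_mem _ hx.2 hy.2, ?_⟩
    rw [LinearMap.mem_ker]
    show sumF n (x - y) = 0
    rw [map_sub, sum_of_mem_perm hx.1, sum_of_mem_perm hy.1, sub_self]
  · intro x hx
    obtain ⟨hxL, hxK⟩ := Submodule.mem_inf.1 hx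
    rcases Nat.eq_zero_or_pos n with hn | hn
    · have : x = 0 := funext fun i => absurd i.2 (by omega)
      rw [this]; exact Submodule.zero_mem _
    · set a₀ : Fin n := ⟨0, hn⟩
      have hsum0 : ∑ a, x a = 0 := LinearMap.mem_ker.1 hxK
      have key : x = ∑ a, (x a / (Fintype.card ↥G : ℝ)) • vab G a a₀ := by
        funext i
        rw [Finset.sum_apply]
        simp only [Pi.smul_apply, smul_eq_mul, vab]
        have h1 : ∀ a, x a * (cnt G a i : ℝ) = x i * (cnt G a i : ℝ) := by
          intro a
          rcases eq_or_ne (cnt G a i) 0 with h | h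
          · simp [h]
          · obtain ⟨g, hg, hgi⟩ := cnt_exists G h
            rw [← hgi, hxL g hg i]
        have e1 : ∀ a, (x a / (Fintype.card ↥G : ℝ)) * ((cnt G a i : ℝ) - (cnt G a₀ i : ℝ))
            = (x i * (cnt G a i : ℝ) - x a * (cnt G a₀ i : ℝ)) / (Fintype.card ↥G : ℝ) := by
          intro a
          rw [← h1 a]
          ring
        rw [Finset.sum_congr rfl (fun a _ => e1 a), ← Finset.sum_div,
          Finset.sum_sub_distrib, ← Finset.mul_sum, ← Finset.sum_mul]
        have h2 : ∑ a, (cnt G a i : ℝ) = (Fintype.card ↥G : ℝ) := by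
          rw [← Nat.cast_sum, cnt_sum]
        rw [h2, hsum0, zero_mul, sub_zero, mul_div_assoc,
          div_self (by exact_mod_cast Fintype.card_ne_zero), mul_one]
      rw [key]
      exact Submodule.sum_mem _ fun a _ => Submodule.smul_mem _ _ (vab_mem G a a₀)

lemma finrank_M :
    Module.finrank ℝ (fixL G ⊓ LinearMap.ker (sumF n) : Submodule ℝ (Fin n → ℝ))
      = Nat.card (MulAction.orbitRel.Quotient G (Fin n)) - 1 := by
  classical
  set Q := MulAction.orbitRel.Quotient G (Fin n) with hQ
  letI : Fintype Q := Fintype.ofFinite _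
  let Φ : (Q → ℝ) →ₗ[ℝ] (Fin n → ℝ) :=
    { toFun := fun y => fun i => y (Quotient.mk'' i)
      map_add' := fun _ _ => rfl
      map_smul' := fun _ _ => rfl }
  have hΦinj : Function.Injective Φ := by
    intro y z h
    funext q
    refine Quotient.inductionOn' q (fun i => ?_)
    exact congrFun h i
  set ω : (Q → ℝ) →ₗ[ℝ] ℝ := (sumF n).comp Φ with hω
  have hMeq : (fixL G ⊓ LinearMap.ker (sumF n) : Submodule ℝ (Fin n → ℝ))
      = Submodule.map Φ (LinearMap.ker ω) := by
    apply le_antisymm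
    · intro x hx
      obtain ⟨hxL, hxK⟩ := Submodule.mem_inf.1 hx
      refine Submodule.mem_map.2 ⟨fun q => x (Quotient.out q), LinearMap.mem_ker.2 ?_, ?_⟩
      · show sumF n (Φ _) = 0
        have : Φ (fun q => x (Quotient.out q)) = x := by
          funext i
          show x (Quotient.out (Quotient.mk'' i : Q)) = x i
          have hrel := Quotient.exact' (Quotient.out_eq' (Quotient.mk'' i : Q))
          obtain ⟨g, hg⟩ := hrel
          rw [← hg]
          exact hxL (g : Equiv.Perm (Fin n)) g.2 i
        rw [this]
        exact hxK
      · funext i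
        show x (Quotient.out (Quotient.mk'' i : Q)) = x i
        have hrel := Quotient.exact' (Quotient.out_eq' (Quotient.mk'' i : Q))
        obtain ⟨g, hg⟩ := hrel
        rw [← hg]
        exact hxL (g : Equiv.Perm (Fin n)) g.2 i
    · rintro _ ⟨y, hy, rfl⟩
      refine Submodule.mem_inf.2 ⟨?_, ?_⟩
      · intro g hg i
        show y (Quotient.mk'' (g i)) = y (Quotient.mk'' i)
        congr 1
        apply Quotient.sound'
        exact ⟨(⟨g, hg⟩ : ↥G), rfl⟩
      · exact hy
  have hrankeq : Module.finrank ℝ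
      (fixL G ⊓ LinearMap.ker (sumF n) : Submodule ℝ (Fin n → ℝ))
      = Module.finrank ℝ (LinearMap.ker ω) := by
    rw [hMeq]
    exact (((LinearMap.ker ω).equivMapOfInjective Φ hΦinj).finrank_eq).symm
  rw [hrankeq]
  have hcard : Nat.card Q = Fintype.card Q := Nat.card_eq_fintype_card
  rcases isEmpty_or_nonempty Q with hQe | hQne
  · have h0 : Fintype.card Q = 0 := Fintype.card_eq_zero
    have : Module.finrank ℝ (LinearMap.ker ω) ≤ Module.finrank ℝ (Q → ℝ) :=
      Submodule.finrank_le _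
    rw [Module.finrank_pi ℝ, h0] at this
    omega
  · obtain ⟨q₀⟩ := hQne
    set mq : ℕ := (Finset.univ.filter (fun i : Fin n => (Quotient.mk'' i : Q) = q₀)).card
      with hmq
    have hmne : mq ≠ 0 := by
      rw [hmq]
      exact Finset.card_ne_zero_of_mem
        (Finset.mem_filter.2 ⟨Finset.mem_univ (Quotient.out q₀), Quotient.out_eq' q₀⟩)
    set y : Q → ℝ := fun q => if q = q₀ then (mq : ℝ)⁻¹ else 0 with hy
    have hωy : ω y = 1 := by
      show sumF n (Φ y) = 1
      show (∑ i : Fin n, if (Quotient.mk'' i : Q) = q₀ then (mq : ℝ)⁻¹ else 0) = 1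
      rw [← Finset.sum_filter, Finset.sum_const, ← hmq, nsmul_eq_mul,
        mul_inv_cancel₀ (by exact_mod_cast hmne)]
    have hsurj : Function.Surjective ω := by
      intro c
      exact ⟨c • y, by rw [map_smul, hωy, smul_eq_mul, mul_one]⟩
    have hrn := LinearMap.finrank_range_add_finrank_ker ω
    rw [LinearMap.range_eq_top.2 hsurj, finrank_top, Module.finrank_pi ℝ,
      Module.finrank_self ℝ] at hrn
    have : 0 < Fintype.card Q := Fintype.card_pos_iff.mpr ⟨q₀⟩
    omega

end

lemma bot_fix_univ (m : ℕ) :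
    {x : Fin m → ℝ | ∀ g ∈ (⊥ : Subgroup (Equiv.Perm (Fin m))), ∀ i, x (g i) = x i}
      = Set.univ := by
  ext x
  simp only [Set.mem_setOf_eq, Set.mem_univ, iff_true]
  intro g hg i
  rw [Subgroup.mem_bot.1 hg]
  rfl

lemma card_orbit_bot (m : ℕ) :
    Nat.card (MulAction.orbitRel.Quotient (⊥ : Subgroup (Equiv.Perm (Fin m))) (Fin m)) = m := by
  have hbij : Function.Bijective
      (Quotient.mk'' : Fin m →
        MulAction.orbitRel.Quotient (⊥ : Subgroup (Equiv.Perm (Fin m))) (Fin m)) := by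
    constructor
    · intro i j h
      obtain ⟨g, hg⟩ := Quotient.exact' h
      have hg1 : (g : Equiv.Perm (Fin m)) = 1 := Subgroup.mem_bot.1 g.2
      have : g • j = i := hg
      rw [Subgroup.smul_def, hg1] at this
      simpa using this.symm
    · intro q
      exact ⟨Quotient.out q, Quotient.out_eq' q⟩
  rw [← Nat.card_eq_of_bijective _ hbij, Nat.card_eq_fintype_card, Fintype.card_fin]

lemma F_convex {n : ℕ} (G : Subgroup (Equiv.Perm (Fin n))) : Convex ℝ (F G) := by
  refine (convex_perm n _).inter ?_
  have : {x : Fin n → ℝ | ∀ g ∈ G, ∀ i, x (g i) = x i} = (fixL G : Set (Fin n → ℝ)) := rfl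
  rw [this]
  exact (fixL G).convex

lemma F_isCompact {n : ℕ} (G : Subgroup (Equiv.Perm (Fin n))) : IsCompact (F G) := by
  refine (isCompact_perm n).inter_right ?_
  have : {x : Fin n → ℝ | ∀ g ∈ G, ∀ i, x (g i) = x i}
      = ⋂ (g : Equiv.Perm (Fin n)) (_ : g ∈ G) (i : Fin n), {x : Fin n → ℝ | x (g i) = x i} := by
    ext x; simp [Set.mem_iInter]
  rw [this]
  exact isClosed_iInter fun g => isClosed_iInter fun _ => isClosed_iInter fun i =>
    isClosed_eq (continuous_apply _) (continuous_apply _)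

lemma F_homeo {n : ℕ} (G : Subgroup (Equiv.Perm (Fin n))) [Fintype ↥G] {d : ℕ}
    (hd : Nat.card (MulAction.orbitRel.Quotient G (Fin n)) - 1 = d) :
    Nonempty (↥(F G) ≃ₜ ↥(Metric.closedBall (0 : Fin d → ℝ) 1)) := by
  apply aux_homeo_ball (F_convex G) (F_isCompact G) ⟨avg G 1, avg_mem_F G 1⟩
  rw [vectorSpan_F_eq, finrank_M, hd]

end PermAux

/-- Let `G` be a subgroup of the symmetric group on `{1,…,n}`, acting on
`ℝ^n` by `(g·x)_{g(i)} = x_i` (equivalently, `x` is fixed iff `x (g i) = x i` for all `i`),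
and let `s` be the number of orbits of `G` on `{1,…,n}`. Then the fixed-point set
`Π_{n-1}^G` of the permutohedron on `(1,…,n)` is homeomorphic to the permutohedron
`Π_{s-1} ⊂ ℝ^s`. -/
theorem fixedPoints_permutohedron_homeomorph (n : ℕ)
    (G : Subgroup (Equiv.Perm (Fin n))) :
    Nonempty
      (↥(permutohedron n (fun i => (i : ℝ) + 1) ∩
          {x : Fin n → ℝ | ∀ g ∈ G, ∀ i : Fin n, x (g i) = x i}) ≃ₜ
        ↥(permutohedron (Nat.card (MulAction.orbitRel.Quotient G (Fin n)))
          (fun i => (i : ℝ) + 1))) := by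
  classical
  letI : Fintype ↥G := Fintype.ofFinite _
  set s' := Nat.card (MulAction.orbitRel.Quotient G (Fin n)) with hs'
  letI : Fintype ↥(⊥ : Subgroup (Equiv.Perm (Fin s'))) := Fintype.ofFinite _
  obtain ⟨h1⟩ := PermAux.F_homeo G (d := s' - 1) rfl
  obtain ⟨h2⟩ := PermAux.F_homeo (⊥ : Subgroup (Equiv.Perm (Fin s'))) (d := s' - 1)
    (by rw [PermAux.card_orbit_bot])
  have hFbot : PermAux.F (⊥ : Subgroup (Equiv.Perm (Fin s')))
      = permutohedron s' (fun i => (i : ℝ) + 1) := by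
    rw [PermAux.F, PermAux.bot_fix_univ, Set.inter_univ]
  exact ⟨h1.trans (h2.symm.trans (Homeomorph.setCongr hFbot))⟩
end

section
/- Let 𝔭 be an ordered partition of {1,…,r} and let a < b be two elements lying in the same block of 𝔭; let 𝔭' denote the b-reduction of 𝔭. Then the operation of b-reduction defines a bijection from the set of refinements 𝔮 of 𝔭 in which a and b lie in the same block of 𝔮 onto the set of refinements of 𝔭'. -/
/-- An ordered partition of a finite type, given as the list of its blocks:
all blocks nonempty, pairwise disjoint, and covering everything. -/
def IsOrderedPartitionList {α : Type*} [DecidableEq α] [Fintype α]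
    (l : List (Finset α)) : Prop :=
  (∀ P ∈ l, P.Nonempty) ∧ l.Pairwise Disjoint ∧
    l.foldr (· ∪ ·) ∅ = (Finset.univ : Finset α)

/-- `q` is a refinement of `p`: `q` splits into consecutive nonempty segments whose unions
are the successive blocks of `p`. -/
def IsRefinement {α : Type*} [DecidableEq α] (q p : List (Finset α)) : Prop :=
  ∃ c : List (List (Finset α)), (∀ chunk ∈ c, chunk ≠ []) ∧ c.flatten = q ∧
    c.map (fun chunk => chunk.foldr (· ∪ ·) ∅) = p

/-- Re-indexing map of `{1,…,r} \ {b}` onto `{1,…,r-1}` (here `r` is `r+2`): indices below `b`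
are kept, indices above `b` are shifted down by one. -/
def reduceIdx {r : ℕ} (b : Fin (r + 2)) (x : Fin (r + 2)) : Fin (r + 1) :=
  if _h : (x : ℕ) < (b : ℕ) then ⟨x, by have hb := b.isLt; omega⟩
  else ⟨(x : ℕ) - 1, by have hx := x.isLt; omega⟩

/-- The `b`-reduction of an ordered partition (as a list of blocks): drop `b` and re-index. -/
def reducePartitionList {r : ℕ} (b : Fin (r + 2)) (p : List (Finset (Fin (r + 2)))) :
    List (Finset (Fin (r + 1))) :=
  p.map fun P => (P.erase b).image (reduceIdx b)

namespace RedAux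

variable {r : ℕ}

/-- The inverse re-indexing map. -/
def expandIdx (b : Fin (r + 2)) (y : Fin (r + 1)) : Fin (r + 2) :=
  if (y : ℕ) < (b : ℕ) then ⟨y, by have := y.isLt; omega⟩
  else ⟨(y : ℕ) + 1, by have := y.isLt; omega⟩

lemma expandIdx_val (b : Fin (r + 2)) (y : Fin (r + 1)) :
    (expandIdx b y : ℕ) = if (y : ℕ) < (b : ℕ) then (y : ℕ) else (y : ℕ) + 1 := by
  unfold expandIdx; split_ifs <;> rfl

lemma reduceIdx_val (b : Fin (r + 2)) (x : Fin (r + 2)) :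
    (reduceIdx b x : ℕ) = if (x : ℕ) < (b : ℕ) then (x : ℕ) else (x : ℕ) - 1 := by
  unfold reduceIdx; split_ifs <;> rfl

lemma expand_ne (b : Fin (r + 2)) (y : Fin (r + 1)) : expandIdx b y ≠ b := by
  intro h
  have h' := congrArg Fin.val h
  rw [expandIdx_val] at h'
  split_ifs at h' <;> omega

lemma reduce_expand (b : Fin (r + 2)) (y : Fin (r + 1)) :
    reduceIdx b (expandIdx b y) = y := by
  have hb := b.isLt
  have hy := y.isLt
  apply Fin.ext
  rw [reduceIdx_val, expandIdx_val]
  split_ifs <;> omega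

lemma expand_reduce (b : Fin (r + 2)) {x : Fin (r + 2)} (hx : x ≠ b) :
    expandIdx b (reduceIdx b x) = x := by
  have hx' : (x : ℕ) ≠ (b : ℕ) := fun h => hx (Fin.ext h)
  have hb := b.isLt
  have hxl := x.isLt
  apply Fin.ext
  rw [expandIdx_val, reduceIdx_val]
  split_ifs <;> omega

/-- Reduction of one block. -/
def redB (b : Fin (r + 2)) (P : Finset (Fin (r + 2))) : Finset (Fin (r + 1)) :=
  (P.erase b).image (reduceIdx b)

/-- Lifting of one block, re-inserting `b` into the block containing `a'`. -/
def liftB (b : Fin (r + 2)) (a' : Fin (r + 1)) (Q : Finset (Fin (r + 1))) :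
    Finset (Fin (r + 2)) :=
  Q.image (expandIdx b) ∪ (if a' ∈ Q then {b} else ∅)

lemma mem_redB {b : Fin (r + 2)} {P : Finset (Fin (r + 2))} {y : Fin (r + 1)} :
    y ∈ redB b P ↔ expandIdx b y ∈ P := by
  unfold redB
  simp only [Finset.mem_image, Finset.mem_erase]
  constructor
  · rintro ⟨x, ⟨hxb, hxP⟩, rfl⟩; rwa [expand_reduce b hxb]
  · intro h; exact ⟨expandIdx b y, ⟨expand_ne b y, h⟩, reduce_expand b y⟩

lemma mem_liftB {b : Fin (r + 2)} {a' : Fin (r + 1)} {Q : Finset (Fin (r + 1))}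
    {x : Fin (r + 2)} :
    x ∈ liftB b a' Q ↔ (if x = b then a' ∈ Q else reduceIdx b x ∈ Q) := by
  unfold liftB
  by_cases hx : x = b
  · subst hx
    rw [if_pos rfl]
    constructor
    · intro h
      rcases Finset.mem_union.mp h with h | h
      · obtain ⟨y, _, hy⟩ := Finset.mem_image.mp h
        exact absurd hy (expand_ne _ y)
      · by_cases h' : a' ∈ Q
        · exact h'
        · rw [if_neg h'] at h
          exact absurd h (Finset.notMem_empty _)
    · intro h
      exact Finset.mem_union_right _ (by rw [if_pos h]; exact Finset.mem_singleton_self _)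
  · rw [if_neg hx]
    constructor
    · intro h
      rcases Finset.mem_union.mp h with h | h
      · obtain ⟨y, hy, rfl⟩ := Finset.mem_image.mp h
        rwa [reduce_expand]
      · by_cases h' : a' ∈ Q
        · rw [if_pos h'] at h
          exact absurd (Finset.mem_singleton.mp h) hx
        · rw [if_neg h'] at h
          exact absurd h (Finset.notMem_empty _)
    · intro h
      exact Finset.mem_union_left _ (Finset.mem_image.mpr ⟨reduceIdx b x, h, expand_reduce b hx⟩)

lemma redB_liftB (b : Fin (r + 2)) (a' : Fin (r + 1)) (Q : Finset (Fin (r + 1))) :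
    redB b (liftB b a' Q) = Q := by
  ext y
  rw [mem_redB, mem_liftB, if_neg (expand_ne b y), reduce_expand]

lemma liftB_redB {b : Fin (r + 2)} {a : Fin (r + 2)} (hab : a ≠ b)
    {P : Finset (Fin (r + 2))} (hP : b ∈ P ↔ a ∈ P) :
    liftB b (reduceIdx b a) (redB b P) = P := by
  ext x
  rw [mem_liftB]
  split_ifs with hx
  · subst hx
    rw [mem_redB, expand_reduce _ hab, ← hP]
  · rw [mem_redB, expand_reduce b hx]

lemma redB_empty (b : Fin (r + 2)) : redB b (∅ : Finset (Fin (r + 2))) = ∅ := by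
  ext y; simp [mem_redB]

lemma redB_union (b : Fin (r + 2)) (P Q : Finset (Fin (r + 2))) :
    redB b (P ∪ Q) = redB b P ∪ redB b Q := by
  ext y; simp [mem_redB]

lemma redB_univ (b : Fin (r + 2)) : redB b (Finset.univ) = Finset.univ := by
  ext y; simp [mem_redB]

lemma liftB_empty (b : Fin (r + 2)) (a' : Fin (r + 1)) :
    liftB b a' (∅ : Finset (Fin (r + 1))) = ∅ := by
  ext x; simp only [mem_liftB]; split_ifs <;> simp

lemma liftB_union (b : Fin (r + 2)) (a' : Fin (r + 1)) (P Q : Finset (Fin (r + 1))) :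
    liftB b a' (P ∪ Q) = liftB b a' P ∪ liftB b a' Q := by
  ext x; simp only [mem_liftB, Finset.mem_union]; split_ifs <;> simp

lemma liftB_univ (b : Fin (r + 2)) (a' : Fin (r + 1)) :
    liftB b a' (Finset.univ) = Finset.univ := by
  ext x; simp only [mem_liftB]; split_ifs <;> simp

lemma redB_disjoint (b : Fin (r + 2)) {P Q : Finset (Fin (r + 2))} (h : Disjoint P Q) :
    Disjoint (redB b P) (redB b Q) := by
  rw [Finset.disjoint_left] at h ⊢
  intro y hy hy'
  rw [mem_redB] at hy hy'
  exact h hy hy'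

lemma liftB_disjoint (b : Fin (r + 2)) (a' : Fin (r + 1))
    {P Q : Finset (Fin (r + 1))} (h : Disjoint P Q) :
    Disjoint (liftB b a' P) (liftB b a' Q) := by
  rw [Finset.disjoint_left] at h ⊢
  intro x hx hx'
  rw [mem_liftB] at hx hx'
  split_ifs at hx hx' <;> exact h hx hx'

lemma foldr_map_hom {α β : Type*} [DecidableEq α] [DecidableEq β]
    (f : Finset α → Finset β) (h0 : f ∅ = ∅)
    (hu : ∀ P Q, f (P ∪ Q) = f P ∪ f Q) (l : List (Finset α)) :
    (l.map f).foldr (· ∪ ·) ∅ = f (l.foldr (· ∪ ·) ∅) := by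
  induction l with
  | nil => simp [h0]
  | cons P l ih => simp [ih, hu]

lemma mem_foldr_union {α : Type*} [DecidableEq α] (l : List (Finset α)) (x : α) :
    x ∈ l.foldr (· ∪ ·) ∅ ↔ ∃ P ∈ l, x ∈ P := by
  induction l <;> simp_all

lemma refinement_map {α β : Type*} [DecidableEq α] [DecidableEq β]
    {q p : List (Finset α)} (f : Finset α → Finset β) (h0 : f ∅ = ∅)
    (hu : ∀ P Q, f (P ∪ Q) = f P ∪ f Q)
    (h : IsRefinement q p) : IsRefinement (q.map f) (p.map f) := by
  obtain ⟨c, hne, hfl, hmap⟩ := h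
  refine ⟨c.map (List.map f), ?_, ?_, ?_⟩
  · intro chunk hc
    rw [List.mem_map] at hc
    obtain ⟨ch, hch, rfl⟩ := hc
    simpa using hne ch hch
  · rw [← hfl, List.map_flatten]
  · rw [← hmap, List.map_map, List.map_map]
    apply List.map_congr_left
    intro ch _
    simp only [Function.comp_apply]
    exact foldr_map_hom f h0 hu ch

lemma mem_iff_mem {α : Type*} [DecidableEq α] {q : List (Finset α)}
    (hq : q.Pairwise Disjoint) {P : Finset α} (hPq : P ∈ q) {a b : α}
    (ha : a ∈ P) (hb : b ∈ P) {Q : Finset α} (hQq : Q ∈ q) : a ∈ Q ↔ b ∈ Q := by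
  have hdis : ∀ ⦃P' : Finset α⦄, P' ∈ q → ∀ ⦃Q' : Finset α⦄, Q' ∈ q → P' ≠ Q' →
      Disjoint P' Q' := haveI : Std.Symm (α := Finset α) Disjoint := ⟨fun _ _ h => h.symm⟩
      List.Pairwise.forall hq
  constructor
  · intro haQ
    by_cases hPQ : P = Q
    · exact hPQ ▸ hb
    · exact absurd haQ (Finset.disjoint_left.mp ((hdis hPq hQq hPQ).symm.symm) ha |>.elim)
  · intro hbQ
    by_cases hPQ : P = Q
    · exact hPQ ▸ ha
    · exact absurd hbQ (Finset.disjoint_left.mp (hdis hPq hQq hPQ) hb |>.elim)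

end RedAux

open RedAux

/-- Let `𝔭` be an ordered partition of `{1,…,r}` (with `r ≥ 2`; ambient
type `Fin (r+2)` here) and `a < b` two elements in the same block of `𝔭`; let `𝔭'` be the
`b`-reduction of `𝔭`. Then `b`-reduction is a bijection from the set of refinements `𝔮`
of `𝔭` in which `a` and `b` lie in the same block onto the set of refinements of `𝔭'`. -/
theorem reduction_bijOn_refinements (r : ℕ) (p : List (Finset (Fin (r + 2))))
    (hp : IsOrderedPartitionList p)
    (a b : Fin (r + 2)) (hab : a < b)
    (hsame : ∃ P ∈ p, a ∈ P ∧ b ∈ P) :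
    Set.BijOn (reducePartitionList b)
      {q : List (Finset (Fin (r + 2))) |
        IsOrderedPartitionList q ∧ IsRefinement q p ∧ ∃ P ∈ q, a ∈ P ∧ b ∈ P}
      {q' : List (Finset (Fin (r + 1))) |
        IsOrderedPartitionList q' ∧ IsRefinement q' (reducePartitionList b p)} := by
  classical
  have hab' : a ≠ b := ne_of_lt hab
  set a' : Fin (r + 1) := reduceIdx b a with ha'
  have hredeq : ∀ l : List (Finset (Fin (r + 2))),
      reducePartitionList b l = l.map (redB b) := fun _ => rfl
  -- lifting a reduced partition recovers the original, given a and b share a block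
  have hlift_red : ∀ q : List (Finset (Fin (r + 2))), q.Pairwise Disjoint →
      (∃ P ∈ q, a ∈ P ∧ b ∈ P) → (q.map (redB b)).map (liftB b a') = q := by
    rintro q hdisj ⟨P, hP, haP, hbP⟩
    rw [List.map_map]
    have h : ∀ Q ∈ q, (liftB b a' ∘ redB b) Q = id Q := by
      intro Q hQ
      exact liftB_redB hab' ((mem_iff_mem hdisj hP haP hbP hQ).symm)
    rw [List.map_congr_left h, List.map_id]
  have hred_lift : ∀ q' : List (Finset (Fin (r + 1))),
      (q'.map (liftB b a')).map (redB b) = q' := by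
    intro q'
    rw [List.map_map]
    have h : ∀ Q ∈ q', (redB b ∘ liftB b a') Q = id Q := fun Q _ => redB_liftB b a' Q
    rw [List.map_congr_left h, List.map_id]
  -- reduction preserves ordered partitions (given a, b share a block)
  have hopred : ∀ q : List (Finset (Fin (r + 2))), IsOrderedPartitionList q →
      (∃ P ∈ q, a ∈ P ∧ b ∈ P) → IsOrderedPartitionList (q.map (redB b)) := by
    rintro q ⟨hne, hdisj, huniv⟩ ⟨P, hP, haP, hbP⟩
    refine ⟨?_, hdisj.map _ (fun _ _ h => redB_disjoint b h), ?_⟩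
    · intro Q' hQ'
      rw [List.mem_map] at hQ'
      obtain ⟨Q, hQ, rfl⟩ := hQ'
      by_cases hbQ : b ∈ Q
      · have haQ : a ∈ Q := (mem_iff_mem hdisj hP haP hbP hQ).mpr hbQ
        exact Finset.Nonempty.image ⟨a, Finset.mem_erase.mpr ⟨hab', haQ⟩⟩ _
      · unfold redB
        rw [Finset.erase_eq_of_notMem hbQ]
        exact (hne Q hQ).image _
    · rw [foldr_map_hom _ (redB_empty b) (redB_union b), huniv, redB_univ]
  -- lifting preserves ordered partitions
  have hoplift : ∀ q' : List (Finset (Fin (r + 1))), IsOrderedPartitionList q' →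
      IsOrderedPartitionList (q'.map (liftB b a')) := by
    rintro q' ⟨hne, hdisj, huniv⟩
    refine ⟨?_, hdisj.map _ (fun _ _ h => liftB_disjoint b a' h), ?_⟩
    · intro Q hQ
      rw [List.mem_map] at hQ
      obtain ⟨Q', hQ', rfl⟩ := hQ
      obtain ⟨y, hy⟩ := hne Q' hQ'
      exact ⟨expandIdx b y, Finset.mem_union_left _ (Finset.mem_image_of_mem _ hy)⟩
    · rw [foldr_map_hom _ (liftB_empty b a') (liftB_union b a'), huniv, liftB_univ]
  refine ⟨?_, ?_, ?_⟩
  · -- MapsTo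
    rintro q ⟨hq, href, hsq⟩
    rw [Set.mem_setOf_eq, hredeq]
    exact ⟨hopred q hq hsq, by
      rw [hredeq]
      exact refinement_map _ (redB_empty b) (redB_union b) href⟩
  · -- InjOn
    rintro q1 ⟨hq1, _, hs1⟩ q2 ⟨hq2, _, hs2⟩ heq
    have heq' : q1.map (redB b) = q2.map (redB b) := by
      rw [← hredeq, ← hredeq]; exact heq
    calc q1 = (q1.map (redB b)).map (liftB b a') := (hlift_red q1 hq1.2.1 hs1).symm
      _ = (q2.map (redB b)).map (liftB b a') := by rw [heq']
      _ = q2 := hlift_red q2 hq2.2.1 hs2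
  · -- SurjOn
    rintro q' ⟨hq', href'⟩
    refine ⟨q'.map (liftB b a'), ⟨hoplift q' hq', ?_, ?_⟩, ?_⟩
    · have h2 := refinement_map (liftB b a') (liftB_empty b a') (liftB_union b a') href'
      rwa [hredeq, hlift_red p hp.2.1 hsame] at h2
    · obtain ⟨Q', hQ', ha'Q'⟩ := (mem_foldr_union q' a').mp
        (by rw [hq'.2.2]; exact Finset.mem_univ a')
      refine ⟨liftB b a' Q', List.mem_map_of_mem hQ', ?_, ?_⟩
      · rw [mem_liftB, if_neg hab']; exact ha'Q'
      · rw [mem_liftB, if_pos rfl]; exact ha'Q'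
    · rw [hredeq]; exact hred_lift q'
end

section
/- Let n ≥ 1 and let ν_1, ν_2 be two sign assignments on the n-cube. Then there exists a function t : {0,1}^n → F_2 such that for every edge (u,v) of the n-cube, ν_1(u,v) + ν_2(u,v) = t(u) + t(v) in F_2. -/
/-- A sign assignment on the `n`-cube, with vertices encoded as subsets `u ⊆ {1,…,n}`:
a function on pairs (used only on edges `v ⊆ u`, `|u| = |v| + 1`) such that around every
2-dimensional face the four edge values sum to `1` in `F₂`. -/
def IsSignAssignment {n : ℕ} (ν : Finset (Fin n) → Finset (Fin n) → ZMod 2) : Prop :=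
  ∀ u v w₁ w₂ : Finset (Fin n), v ⊆ u → u.card = v.card + 2 →
    v ⊆ w₁ → w₁ ⊆ u → w₁.card = v.card + 1 →
    v ⊆ w₂ → w₂ ⊆ u → w₂.card = v.card + 1 → w₁ ≠ w₂ →
    ν u w₁ + ν w₁ v + ν u w₂ + ν w₂ v = 1

/-- Potential function: sum of `δ` along the canonical descending path from `u` to `∅`
obtained by repeatedly deleting the maximal element. -/
def cubePotential {n : ℕ} (δ : Finset (Fin n) → Finset (Fin n) → ZMod 2) :
    Finset (Fin n) → ZMod 2 := fun u =>
  if h : u.Nonempty then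
    δ u (u.erase (u.max' h)) + cubePotential δ (u.erase (u.max' h))
  else 0
termination_by u => u.card
decreasing_by
  exact Finset.card_erase_lt_of_mem (Finset.max'_mem _ h)

lemma cubePotential_key {n : ℕ} (δ : Finset (Fin n) → Finset (Fin n) → ZMod 2)
    (hδ : ∀ u v w₁ w₂ : Finset (Fin n), v ⊆ u → u.card = v.card + 2 →
      v ⊆ w₁ → w₁ ⊆ u → w₁.card = v.card + 1 →
      v ⊆ w₂ → w₂ ⊆ u → w₂.card = v.card + 1 → w₁ ≠ w₂ →
      δ u w₁ + δ w₁ v + δ u w₂ + δ w₂ v = 0) :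
    ∀ k : ℕ, ∀ u v : Finset (Fin n), u.card = k → v ⊆ u → u.card = v.card + 1 →
      δ u v = cubePotential δ u + cubePotential δ v := by
  intro k
  induction k using Nat.strong_induction_on with
  | _ k ih =>
    intro u v hk hvu hcard
    have hu : u.Nonempty := by
      rw [← Finset.card_pos, hcard]; omega
    set m := u.max' hu with hm
    have hmu : m ∈ u := u.max'_mem hu
    have unf : ∀ (w : Finset (Fin n)) (hw : w.Nonempty),
        cubePotential δ w = δ w (w.erase (w.max' hw)) + cubePotential δ (w.erase (w.max' hw)) := by
      intro w hw
      rw [cubePotential, dif_pos hw]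
    rw [unf u hu]
    by_cases hmv : m ∈ v
    · -- m is in v; peel m from both u and v
      have hv : v.Nonempty := ⟨m, hmv⟩
      have hmv' : v.max' hv = m := by
        apply le_antisymm
        · exact u.le_max' _ (hvu (v.max'_mem hv))
        · exact v.le_max' _ hmv
      rw [unf v hv, hmv']
      set u' := u.erase m with hu'
      set v' := v.erase m with hv'
      have hv'u' : v' ⊆ u' := Finset.erase_subset_erase _ hvu
      have hcu' : u'.card = u.card - 1 := Finset.card_erase_of_mem hmu
      have hcv' : v'.card = v.card - 1 := Finset.card_erase_of_mem hmv
      have hvpos : 1 ≤ v.card := Finset.card_pos.mpr hv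
      have hcard' : u'.card = v'.card + 1 := by omega
      have hih : δ u' v' = cubePotential δ u' + cubePotential δ v' := by
        apply ih u'.card (by omega) u' v' rfl hv'u' hcard'
      -- square with top u, bottom v', intermediates v and u'
      have hv'u : v' ⊆ u := (Finset.erase_subset _ _).trans hvu
      have hv'v : v' ⊆ v := Finset.erase_subset _ _
      have hu'u : u' ⊆ u := Finset.erase_subset _ _
      have hne : v ≠ u' := by
        intro h
        rw [h] at hmv
        exact Finset.notMem_erase m u hmv
      have hsq := hδ u v' v u' hv'u (by omega) hv'v hvu (by omega)
        hv'u' hu'u (by omega) hne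
      have h2 : ∀ x : ZMod 2, x + x = 0 := by decide
      linear_combination hsq + hih - h2 (δ v v') - h2 (δ u u') - h2 (δ u' v')
    · -- m ∉ v, so v = u.erase m
      have hveq : v = u.erase m := by
        apply Finset.eq_of_subset_of_card_le
        · intro x hx
          exact Finset.mem_erase.mpr ⟨fun h => hmv (h ▸ hx), hvu hx⟩
        · rw [Finset.card_erase_of_mem hmu]; omega
      rw [← hveq]
      have h2 : ∀ x : ZMod 2, x + x = 0 := by decide
      linear_combination - h2 (cubePotential δ v)

/-- Any two sign assignments on the `n`-cube (`n ≥ 1`) differ by a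
coboundary: there is `t : {0,1}^n → F₂` with `ν₁(u,v) + ν₂(u,v) = t(u) + t(v)` on every
edge `(u,v)`. -/
theorem sign_assignments_differ_by_coboundary (n : ℕ) (hn : 1 ≤ n)
    (ν₁ ν₂ : Finset (Fin n) → Finset (Fin n) → ZMod 2)
    (h₁ : IsSignAssignment ν₁) (h₂ : IsSignAssignment ν₂) :
    ∃ t : Finset (Fin n) → ZMod 2,
      ∀ u v : Finset (Fin n), v ⊆ u → u.card = v.card + 1 →
        ν₁ u v + ν₂ u v = t u + t v := by
  set δ : Finset (Fin n) → Finset (Fin n) → ZMod 2 := fun u v => ν₁ u v + ν₂ u v with hδdef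
  have hδ : ∀ u v w₁ w₂ : Finset (Fin n), v ⊆ u → u.card = v.card + 2 →
      v ⊆ w₁ → w₁ ⊆ u → w₁.card = v.card + 1 →
      v ⊆ w₂ → w₂ ⊆ u → w₂.card = v.card + 1 → w₁ ≠ w₂ →
      δ u w₁ + δ w₁ v + δ u w₂ + δ w₂ v = 0 := by
    intro u v w₁ w₂ a b c d e f g i j
    have e₁ := h₁ u v w₁ w₂ a b c d e f g i j
    have e₂ := h₂ u v w₁ w₂ a b c d e f g i j
    simp only [hδdef]
    have : (1 : ZMod 2) + 1 = 0 := by decide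
    linear_combination e₁ + e₂ + this
  exact ⟨cubePotential δ, fun u v hvu hc =>
    cubePotential_key δ hδ u.card u v rfl hvu hc⟩
end
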